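/- arXiv:2512.01655 — 8 statements merged into one kernel-verified Lean document; each statement's English description precedes it below -/
import Mathlib

section
/- Let r > 0 and σ > 0, let (ρ_n)_{n∈ℕ} be a sequence of nonnegative measurable functions on ℝ² such that ∫_{B_r(0)} ρ_n dx > σ for every n, and let (u_n)_{n∈ℕ} be a sequence of real-valued measurable functions on ℝ² such that sup_n ∫_{ℝ²} u_n² dx < ∞ and sup_n ∬_{ℝ²×ℝ²} log(1+|x−y|) ρ_n(x) u_n(y)² dx dy < ∞. Then sup_n ∫_{ℝ²} log(1+|x|) u_n(x)² dx < ∞. -/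
open MeasureTheory ENNReal

noncomputable section

abbrev Plane := EuclideanSpace ℝ (Fin 2)

lemma log_key {a b c : ℝ} (ha : 0 ≤ a) (hb : 0 ≤ b) (hc : 0 ≤ c) (h : c ≤ a + b) :
    Real.log (1 + c) ≤ Real.log (1 + a) + Real.log (1 + b) := by
  have h1 : (0:ℝ) < 1 + a := by linarith
  have h2 : (0:ℝ) < 1 + b := by linarith
  have : (1 + c) ≤ (1 + a) * (1 + b) := by nlinarith
  calc Real.log (1 + c) ≤ Real.log ((1 + a) * (1 + b)) :=
        Real.log_le_log (by linarith) this
    _ = Real.log (1 + a) + Real.log (1 + b) := Real.log_mul h1.ne' h2.ne'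

lemma iSup_min_nat (a : ℝ≥0∞) : (⨆ M : ℕ, min a (M : ℝ≥0∞)) = a := by
  simp only [← inf_iSup_eq, ENNReal.iSup_natCast, inf_top_eq]

/-- If `ρ n` are nonnegative measurable functions whose integrals over `B_r(0)` exceed `σ > 0`,
and `u n` are measurable with uniformly bounded `L²` norms and uniformly bounded
`∬ log(1+|x-y|) ρ_n(x) u_n(y)² dx dy`, then `∫ log(1+|x|) u_n(x)² dx` is uniformly bounded. -/
theorem stmt0 (r σ : ℝ) (hr : 0 < r) (hσ : 0 < σ)
    (ρ : ℕ → Plane → ℝ) (hρmeas : ∀ n, Measurable (ρ n)) (hρnonneg : ∀ n x, 0 ≤ ρ n x)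
    (hρball : ∀ n, ENNReal.ofReal σ <
      ∫⁻ x in Metric.ball (0 : Plane) r, ENNReal.ofReal (ρ n x))
    (u : ℕ → Plane → ℝ) (humeas : ∀ n, Measurable (u n))
    (hL2 : (⨆ n, ∫⁻ x, ENNReal.ofReal ((u n x) ^ 2)) < ⊤)
    (hB1 : (⨆ n, ∫⁻ x, ∫⁻ y,
      ENNReal.ofReal (Real.log (1 + ‖x - y‖) * ρ n x * (u n y) ^ 2)) < ⊤) :
    (⨆ n, ∫⁻ x, ENNReal.ofReal (Real.log (1 + ‖x‖) * (u n x) ^ 2)) < ⊤ := by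
  set σE : ℝ≥0∞ := ENNReal.ofReal σ with hσE
  have hσE0 : σE ≠ 0 := by simp [hσE, ENNReal.ofReal_eq_zero, not_le, hσ]
  have hσEtop : σE ≠ ⊤ := ENNReal.ofReal_ne_top
  set SL : ℝ≥0∞ := ⨆ n, ∫⁻ x, ENNReal.ofReal ((u n x) ^ 2) with hSL
  set SB : ℝ≥0∞ := ⨆ n, ∫⁻ x, ∫⁻ y,
      ENNReal.ofReal (Real.log (1 + ‖x - y‖) * ρ n x * (u n y) ^ 2) with hSB
  set K : ℝ≥0∞ := (SB + σE * ENNReal.ofReal (Real.log (1 + r)) * SL) / σE with hK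
  have hKtop : K < ⊤ := by
    apply ENNReal.div_lt_top _ hσE0
    exact ENNReal.add_ne_top.2 ⟨hB1.ne,
      ENNReal.mul_ne_top (ENNReal.mul_ne_top hσEtop ENNReal.ofReal_ne_top) hL2.ne⟩
  refine lt_of_le_of_lt (iSup_le fun n => ?_) hKtop
  set T : ℝ≥0∞ := ∫⁻ x, ENNReal.ofReal (Real.log (1 + ‖x‖) * (u n x) ^ 2) with hT
  rw [hK, ENNReal.le_div_iff_mul_le (Or.inl hσE0) (Or.inl hσEtop)]
  -- step 1: find M with σ < ∫_{ball} min (ρ) M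
  have hmin_meas : ∀ M : ℕ, Measurable fun x => min (ENNReal.ofReal (ρ n x)) (M : ℝ≥0∞) :=
    fun M => (ENNReal.measurable_ofReal.comp (hρmeas n)).min measurable_const
  have hex : ∃ M : ℕ, σE < ∫⁻ x in Metric.ball (0 : Plane) r,
      min (ENNReal.ofReal (ρ n x)) (M : ℝ≥0∞) := by
    by_contra h
    push_neg at h
    have := lintegral_iSup (μ := volume.restrict (Metric.ball (0:Plane) r))
      (f := fun M : ℕ => fun x => min (ENNReal.ofReal (ρ n x)) (M : ℝ≥0∞))
      hmin_meas (fun i j hij x => min_le_min le_rfl (by exact_mod_cast Nat.cast_le.2 hij))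
    simp only [iSup_min_nat] at this
    have h2 := (hρball n)
    rw [this] at h2
    exact absurd (iSup_le h) (not_le.2 h2)
  obtain ⟨M, hM⟩ := hex
  set g : Plane → ℝ≥0∞ := fun x => min (ENNReal.ofReal (ρ n x)) (M : ℝ≥0∞) with hg
  set I : ℝ≥0∞ := ∫⁻ x in Metric.ball (0 : Plane) r, g x with hI
  have hI0 : I ≠ 0 := fun h => by simp [h] at hM
  have hItop : I ≠ ⊤ := by
    refine ne_top_of_le_ne_top ?_ (lintegral_mono (fun x => min_le_right _ _))
    rw [lintegral_const, Measure.restrict_apply_univ]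
    exact ENNReal.mul_ne_top (by simp) measure_ball_lt_top.ne
  set c : ℝ≥0∞ := σE / I with hc
  have hcI : c * I = σE := ENNReal.div_mul_cancel hI0 hItop
  have hc1 : c ≤ 1 := ENNReal.div_le_of_le_mul (by simpa using hM.le)
  have hctop : c ≠ ⊤ := ne_top_of_le_ne_top one_ne_top hc1
  have hcg_meas : Measurable fun x => c * g x := measurable_const.mul (hmin_meas M)
  -- main computation
  have key : σE * T = ∫⁻ x in Metric.ball (0 : Plane) r, (c * g x) * T := by
    rw [lintegral_mul_const T hcg_meas, lintegral_const_mul' _ _ hctop, ← hI, hcI]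
  rw [mul_comm, key]
  set L2n : ℝ≥0∞ := ∫⁻ y, ENNReal.ofReal ((u n y) ^ 2) with hL2n
  have hL2nSL : L2n ≤ SL := le_iSup (fun n => ∫⁻ x, ENNReal.ofReal ((u n x) ^ 2)) n
  set A : Plane → ℝ≥0∞ := fun x => ∫⁻ y,
      ENNReal.ofReal (Real.log (1 + ‖x - y‖) * ρ n x * (u n y) ^ 2) with hA
  set B : Plane → ℝ≥0∞ := fun x =>
      (c * g x) * (ENNReal.ofReal (Real.log (1 + r)) * L2n) with hB
  have hBmeas : Measurable B := hcg_meas.mul_const _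
  have pointwise : ∀ x ∈ Metric.ball (0 : Plane) r, (c * g x) * T ≤ A x + B x := by
    intro x hx
    have hxr : ‖x‖ < r := by simpa [Metric.mem_ball] using hx
    have inner : (c * g x) * T ≤ ∫⁻ y, ((ENNReal.ofReal (ρ n x)) *
        ENNReal.ofReal (Real.log (1 + ‖x - y‖) * (u n y) ^ 2)
        + (c * g x) * ENNReal.ofReal (Real.log (1 + r) * (u n y) ^ 2)) := by
      rw [hT, ← lintegral_const_mul' _ _ (ENNReal.mul_ne_top hctop
        (ne_top_of_le_ne_top (by simp) (min_le_right _ _)))]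
      refine lintegral_mono fun y => ?_
      have hlog : Real.log (1 + ‖y‖) ≤
          Real.log (1 + ‖x - y‖) + Real.log (1 + r) := by
        refine log_key (norm_nonneg _) hr.le (norm_nonneg _) ?_
        calc ‖y‖ ≤ ‖x - y‖ + ‖x‖ := by
              simpa using norm_sub_le (x - y) x |>.trans_eq (by simp)
          _ ≤ ‖x - y‖ + r := by linarith
      have hsq : (0:ℝ) ≤ (u n y) ^ 2 := sq_nonneg _
      have hstep : ENNReal.ofReal (Real.log (1 + ‖y‖) * (u n y) ^ 2) ≤
          ENNReal.ofReal (Real.log (1 + ‖x - y‖) * (u n y) ^ 2)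
          + ENNReal.ofReal (Real.log (1 + r) * (u n y) ^ 2) := by
        rw [← ENNReal.ofReal_add (mul_nonneg (Real.log_nonneg (by
              have := norm_nonneg (x - y); linarith)) hsq)
            (mul_nonneg (Real.log_nonneg (by linarith)) hsq), ← add_mul]
        exact ENNReal.ofReal_le_ofReal (mul_le_mul_of_nonneg_right hlog hsq)
      calc (c * g x) * ENNReal.ofReal (Real.log (1 + ‖y‖) * (u n y) ^ 2)
          ≤ (c * g x) * (ENNReal.ofReal (Real.log (1 + ‖x - y‖) * (u n y) ^ 2)
            + ENNReal.ofReal (Real.log (1 + r) * (u n y) ^ 2)) :=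
            mul_le_mul_right hstep _
        _ ≤ _ := by
            rw [mul_add]
            refine add_le_add (mul_le_mul_left ?_ _) le_rfl
            calc c * g x ≤ 1 * g x := mul_le_mul_left hc1 _
              _ = g x := one_mul _
              _ ≤ ENNReal.ofReal (ρ n x) := min_le_left _ _
    refine inner.trans ?_
    have hmeas2 : Measurable fun y => (c * g x) *
        ENNReal.ofReal (Real.log (1 + r) * (u n y) ^ 2) := by
      refine measurable_const.mul (ENNReal.measurable_ofReal.comp ?_)
      exact (measurable_const.mul ((humeas n).pow_const 2))
    rw [lintegral_add_right _ hmeas2]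
    refine add_le_add ?_ ?_
    · -- equals A x
      refine le_of_eq (lintegral_congr fun y => ?_)
      rw [show Real.log (1 + ‖x - y‖) * ρ n x * (u n y) ^ 2
          = ρ n x * (Real.log (1 + ‖x - y‖) * (u n y) ^ 2) by ring,
        ENNReal.ofReal_mul (hρnonneg n x)]
    · -- equals B x
      refine le_of_eq ?_
      show _ = c * g x * (ENNReal.ofReal (Real.log (1 + r)) * L2n)
      rw [lintegral_const_mul' _ _ (ENNReal.mul_ne_top hctop
        (ne_top_of_le_ne_top (by simp) (min_le_right _ _)))]
      congr 1
      rw [hL2n, ← lintegral_const_mul' _ _ ENNReal.ofReal_ne_top]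
      refine lintegral_congr fun y => ?_
      rw [ENNReal.ofReal_mul (Real.log_nonneg (by linarith))]
  calc (∫⁻ x in Metric.ball (0 : Plane) r, (c * g x) * T)
      ≤ ∫⁻ x in Metric.ball (0 : Plane) r, (A x + B x) := by
        refine setLIntegral_mono ?_ pointwise
        refine Measurable.add ?_ hBmeas
        refine Measurable.lintegral_prod_right' (f := fun p : Plane × Plane =>
          ENNReal.ofReal (Real.log (1 + ‖p.1 - p.2‖) * ρ n p.1 * (u n p.2) ^ 2)) ?_
        refine ENNReal.measurable_ofReal.comp ?_
        refine Measurable.mul (Measurable.mul ?_ ((hρmeas n).comp measurable_fst)) ?_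
        · exact (Real.measurable_log.comp
            ((measurable_const.add ((measurable_fst.sub measurable_snd).norm))))
        · exact ((humeas n).comp measurable_snd).pow_const 2
    _ = (∫⁻ x in Metric.ball (0 : Plane) r, A x)
        + ∫⁻ x in Metric.ball (0 : Plane) r, B x := lintegral_add_right _ hBmeas
    _ ≤ SB + σE * ENNReal.ofReal (Real.log (1 + r)) * SL := by
        refine add_le_add ?_ ?_
        · calc (∫⁻ x in Metric.ball (0 : Plane) r, A x)
              ≤ ∫⁻ x, A x := setLIntegral_le_lintegral _ _
            _ ≤ SB := le_iSup (fun n => ∫⁻ x, ∫⁻ y,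
                ENNReal.ofReal (Real.log (1 + ‖x - y‖) * ρ n x * (u n y) ^ 2)) n
        · rw [hB]
          rw [lintegral_mul_const _ hcg_meas, lintegral_const_mul' _ _ hctop, ← hI, hcI]
          rw [mul_assoc]
          exact mul_le_mul_right (mul_le_mul_right hL2nSL _) _
end
end

section
/- Let r > 0 and σ > 0, let (ρ_n)_{n∈ℕ} be a sequence of nonnegative measurable functions on ℝ² such that ∫_{B_r(0)} ρ_n dx > σ for every n, and let (u_n)_{n∈ℕ} be a sequence of real-valued measurable functions on ℝ². If ∬_{ℝ²×ℝ²} log(1+|x−y|) ρ_n(x) u_n(y)² dx dy → 0 and ∫_{ℝ²} u_n² dx → 0 as n → ∞, then ∫_{ℝ²} log(1+|x|) u_n(x)² dx → 0 as n → ∞. -/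
open MeasureTheory

noncomputable section

private lemma aux_log {r b c : ℝ} (hr : 0 < r) (hb : 2*r ≤ b) (hc : b - r ≤ c) :
    Real.log (1 + b) ≤ 2 * Real.log (1 + c) := by
  have h1 : (0:ℝ) < 1 + b := by linarith
  have h3 : 1 + b ≤ (1 + c)^2 := by nlinarith
  calc Real.log (1+b) ≤ Real.log ((1+c)^2) := Real.log_le_log h1 h3
    _ = 2 * Real.log (1+c) := by rw [Real.log_pow]; push_cast; ring

/-- If `ρ n` are nonnegative measurable functions whose integrals over `B_r(0)` exceed `σ > 0`,
`u n` are measurable, `∬ log(1+|x-y|) ρ_n(x) u_n(y)² dx dy → 0` and `∫ u_n² → 0`,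
then `∫ log(1+|x|) u_n(x)² dx → 0`. -/
theorem stmt1 (r σ : ℝ) (hr : 0 < r) (hσ : 0 < σ)
    (ρ : ℕ → Plane → ℝ) (hρmeas : ∀ n, Measurable (ρ n)) (hρnonneg : ∀ n x, 0 ≤ ρ n x)
    (hρball : ∀ n, ENNReal.ofReal σ <
      ∫⁻ x in Metric.ball (0 : Plane) r, ENNReal.ofReal (ρ n x))
    (u : ℕ → Plane → ℝ) (humeas : ∀ n, Measurable (u n))
    (hB1 : Filter.Tendsto (fun n => ∫⁻ x, ∫⁻ y,
      ENNReal.ofReal (Real.log (1 + ‖x - y‖) * ρ n x * (u n y) ^ 2)) Filter.atTop (nhds 0))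
    (hL2 : Filter.Tendsto (fun n => ∫⁻ x, ENNReal.ofReal ((u n x) ^ 2))
      Filter.atTop (nhds 0)) :
    Filter.Tendsto (fun n => ∫⁻ x, ENNReal.ofReal (Real.log (1 + ‖x‖) * (u n x) ^ 2))
      Filter.atTop (nhds 0) := by
  have hσ0 : ENNReal.ofReal σ ≠ 0 := (ENNReal.ofReal_pos.mpr hσ).ne'
  set s : Set Plane := Metric.ball (0:Plane) (2*r) with hs
  have hsm : MeasurableSet s := Metric.isOpen_ball.measurableSet
  have key : ∀ n, (∫⁻ y, ENNReal.ofReal (Real.log (1 + ‖y‖) * (u n y) ^ 2)) ≤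
      ENNReal.ofReal (Real.log (1 + 2*r)) * (∫⁻ x, ENNReal.ofReal ((u n x) ^ 2)) +
      (2 / ENNReal.ofReal σ) * (∫⁻ x, ∫⁻ y,
        ENNReal.ofReal (Real.log (1 + ‖x - y‖) * ρ n x * (u n y) ^ 2)) := by
    intro n
    have hmeasu : Measurable fun y => ENNReal.ofReal ((u n y) ^ 2) :=
      ((humeas n).pow_const 2).ennreal_ofReal
    have hsplit : (∫⁻ y, ENNReal.ofReal (Real.log (1 + ‖y‖) * (u n y) ^ 2)) =
        (∫⁻ y in s, ENNReal.ofReal (Real.log (1 + ‖y‖) * (u n y) ^ 2)) +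
        (∫⁻ y in sᶜ, ENNReal.ofReal (Real.log (1 + ‖y‖) * (u n y) ^ 2)) :=
      (lintegral_add_compl _ hsm).symm
    have hA : (∫⁻ y in s, ENNReal.ofReal (Real.log (1 + ‖y‖) * (u n y) ^ 2)) ≤
        ENNReal.ofReal (Real.log (1+2*r)) * ∫⁻ x, ENNReal.ofReal ((u n x) ^ 2) := by
      calc (∫⁻ y in s, ENNReal.ofReal (Real.log (1 + ‖y‖) * (u n y) ^ 2))
          ≤ ∫⁻ y in s, ENNReal.ofReal (Real.log (1+2*r)) * ENNReal.ofReal ((u n y) ^ 2) := by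
            refine setLIntegral_mono' hsm (fun y hy => ?_)
            have hy' : ‖y‖ < 2*r := by
              have := Metric.mem_ball.mp hy
              rwa [dist_zero_right] at this
            rw [← ENNReal.ofReal_mul (Real.log_nonneg (by linarith))]
            refine ENNReal.ofReal_le_ofReal
              (mul_le_mul_of_nonneg_right ?_ (sq_nonneg _))
            exact Real.log_le_log (by positivity) (by linarith)
        _ = ENNReal.ofReal (Real.log (1+2*r)) * ∫⁻ y in s, ENNReal.ofReal ((u n y) ^ 2) :=
            lintegral_const_mul _ hmeasu
        _ ≤ _ := mul_le_mul_right (setLIntegral_le_lintegral _ _) _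
    have hB : (∫⁻ y in sᶜ, ENNReal.ofReal (Real.log (1 + ‖y‖) * (u n y) ^ 2)) ≤
        (2 / ENNReal.ofReal σ) * ∫⁻ x, ∫⁻ y,
          ENNReal.ofReal (Real.log (1 + ‖x - y‖) * ρ n x * (u n y) ^ 2) := by
      set A := ∫⁻ y in sᶜ, ENNReal.ofReal (Real.log (1 + ‖y‖) * (u n y) ^ 2) with hA'
      set B := ∫⁻ x, ∫⁻ y,
          ENNReal.ofReal (Real.log (1 + ‖x - y‖) * ρ n x * (u n y) ^ 2) with hB'
      have hmain : ENNReal.ofReal σ * A ≤ 2 * B := by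
        calc ENNReal.ofReal σ * A
            ≤ (∫⁻ x in Metric.ball (0:Plane) r, ENNReal.ofReal (ρ n x)) * A :=
              mul_le_mul_left (hρball n).le A
          _ = ∫⁻ x in Metric.ball (0:Plane) r, ENNReal.ofReal (ρ n x) * A :=
              (lintegral_mul_const A (hρmeas n).ennreal_ofReal).symm
          _ ≤ ∫⁻ x in Metric.ball (0:Plane) r, 2 * ∫⁻ y,
                ENNReal.ofReal (Real.log (1 + ‖x - y‖) * ρ n x * (u n y) ^ 2) := by
              refine setLIntegral_mono' Metric.isOpen_ball.measurableSet (fun x hx => ?_)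
              have hx' : ‖x‖ < r := by
                have := Metric.mem_ball.mp hx
                rwa [dist_zero_right] at this
              have step1 : A ≤ 2 * ∫⁻ y,
                  ENNReal.ofReal (Real.log (1 + ‖x - y‖) * (u n y) ^ 2) := by
                calc A ≤ ∫⁻ y in sᶜ,
                      2 * ENNReal.ofReal (Real.log (1 + ‖x - y‖) * (u n y) ^ 2) := by
                      refine setLIntegral_mono' hsm.compl (fun y hy => ?_)
                      have hy' : 2*r ≤ ‖y‖ := by
                        have : ¬ (dist y 0 < 2*r) := fun h => hy (Metric.mem_ball.mpr h)
                        rwa [dist_zero_right, not_lt] at this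
                      have hxy : ‖y‖ - r ≤ ‖x - y‖ := by
                        have h1 : ‖y‖ - ‖x‖ ≤ ‖y - x‖ := norm_sub_norm_le y x
                        rw [norm_sub_rev] at h1
                        linarith
                      have hlog : Real.log (1 + ‖y‖) * (u n y) ^ 2 ≤
                          2 * (Real.log (1 + ‖x - y‖) * (u n y) ^ 2) := by
                        have := aux_log hr hy' hxy
                        nlinarith [sq_nonneg (u n y)]
                      calc ENNReal.ofReal (Real.log (1 + ‖y‖) * (u n y) ^ 2)
                          ≤ ENNReal.ofReal (2 * (Real.log (1 + ‖x - y‖) * (u n y) ^ 2)) :=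
                            ENNReal.ofReal_le_ofReal hlog
                        _ = 2 * ENNReal.ofReal (Real.log (1 + ‖x - y‖) * (u n y) ^ 2) := by
                            rw [ENNReal.ofReal_mul (by norm_num)]
                            norm_num
                  _ = 2 * ∫⁻ y in sᶜ,
                        ENNReal.ofReal (Real.log (1 + ‖x - y‖) * (u n y) ^ 2) :=
                      lintegral_const_mul' _ _ (by norm_num)
                  _ ≤ 2 * ∫⁻ y,
                        ENNReal.ofReal (Real.log (1 + ‖x - y‖) * (u n y) ^ 2) :=
                      mul_le_mul_right (setLIntegral_le_lintegral _ _) 2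
              calc ENNReal.ofReal (ρ n x) * A
                  ≤ ENNReal.ofReal (ρ n x) * (2 * ∫⁻ y,
                      ENNReal.ofReal (Real.log (1 + ‖x - y‖) * (u n y) ^ 2)) :=
                    mul_le_mul_right step1 _
                _ = 2 * (ENNReal.ofReal (ρ n x) * ∫⁻ y,
                      ENNReal.ofReal (Real.log (1 + ‖x - y‖) * (u n y) ^ 2)) := by ring
                _ = 2 * ∫⁻ y, ENNReal.ofReal (ρ n x) *
                      ENNReal.ofReal (Real.log (1 + ‖x - y‖) * (u n y) ^ 2) := by
                    rw [lintegral_const_mul' _ _ ENNReal.ofReal_ne_top]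
                _ = 2 * ∫⁻ y,
                      ENNReal.ofReal (Real.log (1 + ‖x - y‖) * ρ n x * (u n y) ^ 2) := by
                    congr 1
                    refine lintegral_congr (fun y => ?_)
                    rw [← ENNReal.ofReal_mul (hρnonneg n x)]
                    congr 1
                    ring
          _ = 2 * ∫⁻ x in Metric.ball (0:Plane) r, ∫⁻ y,
                ENNReal.ofReal (Real.log (1 + ‖x - y‖) * ρ n x * (u n y) ^ 2) :=
              lintegral_const_mul' _ _ (by norm_num)
          _ ≤ 2 * B := mul_le_mul_right (setLIntegral_le_lintegral _ _) 2
      have hdiv : A ≤ (2 * B) / ENNReal.ofReal σ :=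
        (ENNReal.le_div_iff_mul_le (Or.inl hσ0) (Or.inl ENNReal.ofReal_ne_top)).mpr
          (by rwa [mul_comm] at hmain)
      calc A ≤ (2 * B) / ENNReal.ofReal σ := hdiv
        _ = (2 / ENNReal.ofReal σ) * B := by
            rw [ENNReal.div_eq_inv_mul, ENNReal.div_eq_inv_mul]; ring
    rw [hsplit]
    exact add_le_add hA hB
  have hC1top : ENNReal.ofReal (Real.log (1 + 2*r)) ≠ ⊤ := ENNReal.ofReal_ne_top
  have hC2top : (2 / ENNReal.ofReal σ) ≠ ⊤ := by
    simp [ENNReal.div_eq_top, hσ0]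
  have hbound : Filter.Tendsto (fun n =>
      ENNReal.ofReal (Real.log (1 + 2*r)) * (∫⁻ x, ENNReal.ofReal ((u n x) ^ 2)) +
      (2 / ENNReal.ofReal σ) * (∫⁻ x, ∫⁻ y,
        ENNReal.ofReal (Real.log (1 + ‖x - y‖) * ρ n x * (u n y) ^ 2)))
      Filter.atTop (nhds 0) := by
    have h1 := ENNReal.Tendsto.const_mul hL2 (Or.inr hC1top)
    have h2 := ENNReal.Tendsto.const_mul hB1 (Or.inr hC2top)
    simpa using h1.add h2
  exact tendsto_of_tendsto_of_tendsto_of_le_of_le tendsto_const_nhds hbound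
    (fun n => zero_le) key
end
end

section
/- Let r > 0 and σ > 0, let ρ : ℝ² → [0,∞) be measurable with ∫_{B_r(0)} ρ dx ≥ σ, and let u : ℝ² → ℝ be measurable. Then ∬_{ℝ²×ℝ²} log(1+|x−y|) ρ(x) u(y)² dx dy + (σ/2)·log(1+2r)·∫_{ℝ²} u(y)² dy ≥ (σ/2)·∫_{ℝ²} log(1+|y|) u(y)² dy, where all integrals are taken in [0,∞]. -/
open MeasureTheory

noncomputable section

/-- Quantitative version: for `ρ ≥ 0` measurable with `∫_{B_r(0)} ρ ≥ σ` and `u` measurable,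
`∬ log(1+|x-y|) ρ(x) u(y)² + (σ/2)·log(1+2r)·∫ u² ≥ (σ/2)·∫ log(1+|y|) u(y)²`. -/
theorem stmt2 (r σ : ℝ) (hr : 0 < r) (hσ : 0 < σ)
    (ρ : Plane → ℝ) (hρmeas : Measurable ρ) (hρnonneg : ∀ x, 0 ≤ ρ x)
    (hρball : ENNReal.ofReal σ ≤
      ∫⁻ x in Metric.ball (0 : Plane) r, ENNReal.ofReal (ρ x))
    (u : Plane → ℝ) (humeas : Measurable u) :
    ENNReal.ofReal (σ / 2) * ∫⁻ y, ENNReal.ofReal (Real.log (1 + ‖y‖) * (u y) ^ 2) ≤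
      (∫⁻ x, ∫⁻ y, ENNReal.ofReal (Real.log (1 + ‖x - y‖) * ρ x * (u y) ^ 2)) +
        ENNReal.ofReal (σ / 2 * Real.log (1 + 2 * r)) *
          ∫⁻ y, ENNReal.ofReal ((u y) ^ 2) := by
  classical
  set B := Metric.ball (0 : Plane) r with hBdef
  -- the key pointwise log inequality
  have hlog : ∀ x ∈ B, ∀ y : Plane,
      Real.log (1 + ‖y‖) ≤ Real.log (1 + ‖x - y‖) + Real.log (1 + 2 * r) := by
    intro x hx y
    have hx' : ‖x‖ < r := by simpa [hBdef] using hx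
    have h1 : (0:ℝ) < 1 + ‖x - y‖ := by positivity
    have h2 : (0:ℝ) < 1 + 2 * r := by linarith
    rw [← Real.log_mul (ne_of_gt h1) (ne_of_gt h2)]
    have hy : ‖y‖ ≤ ‖x‖ + ‖x - y‖ := by
      have := norm_sub_le x (x - y)
      simpa using this
    have hy2 : (1:ℝ) + ‖y‖ ≤ (1 + ‖x - y‖) * (1 + 2 * r) := by
      nlinarith [norm_nonneg (x - y), norm_nonneg x]
    exact Real.log_le_log (by positivity) hy2
  have hL1nonneg : ∀ x y : Plane, 0 ≤ Real.log (1 + ‖x - y‖) := fun x y =>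
    Real.log_nonneg (by nlinarith [norm_nonneg (x - y)])
  have hL2nonneg : 0 ≤ Real.log (1 + 2 * r) := Real.log_nonneg (by linarith)
  -- monotone truncation
  have hsup : ∀ x : Plane,
      (⨆ n : ℕ, ENNReal.ofReal (min (ρ x) n)) = ENNReal.ofReal (ρ x) := by
    intro x
    apply le_antisymm
    · exact iSup_le fun n => ENNReal.ofReal_le_ofReal (min_le_left _ _)
    · refine le_iSup_of_le ⌈ρ x⌉₊ (ENNReal.ofReal_le_ofReal ?_)
      rw [min_eq_left (Nat.le_ceil (ρ x))]
  have hmono : Monotone (fun (n : ℕ) (x : Plane) => ENNReal.ofReal (min (ρ x) n)) := by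
    intro m n hmn
    intro x
    exact ENNReal.ofReal_le_ofReal (min_le_min le_rfl (by exact_mod_cast hmn))
  have hmeas_min : ∀ n : ℕ, Measurable fun x : Plane => ENNReal.ofReal (min (ρ x) n) :=
    fun n => ENNReal.measurable_ofReal.comp (hρmeas.min measurable_const)
  have hMCT : (⨆ n : ℕ, ∫⁻ x in B, ENNReal.ofReal (min (ρ x) n)) =
      ∫⁻ x in B, ENNReal.ofReal (ρ x) := by
    rw [← lintegral_iSup hmeas_min hmono]
    exact lintegral_congr fun x => hsup x
  -- pick n with integral of truncation > σ/2
  have hhalf : ENNReal.ofReal (σ / 2) < ENNReal.ofReal σ := by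
    rw [ENNReal.ofReal_lt_ofReal_iff hσ]; linarith
  obtain ⟨n, hn⟩ : ∃ n : ℕ,
      ENNReal.ofReal (σ / 2) < ∫⁻ x in B, ENNReal.ofReal (min (ρ x) n) := by
    have : ENNReal.ofReal (σ / 2) < ⨆ n : ℕ, ∫⁻ x in B, ENNReal.ofReal (min (ρ x) n) := by
      rw [hMCT]; exact lt_of_lt_of_le hhalf hρball
    exact lt_iSup_iff.mp this
  set A : ENNReal := ∫⁻ x in B, ENNReal.ofReal (min (ρ x) n) with hAdef
  have hAfin : A ≠ ⊤ := by
    have hle : A ≤ (n : ENNReal) * volume B := by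
      calc A ≤ ∫⁻ _x in B, (n : ENNReal) := by
              apply lintegral_mono
              intro x
              calc ENNReal.ofReal (min (ρ x) n) ≤ ENNReal.ofReal (n : ℝ) :=
                    ENNReal.ofReal_le_ofReal (min_le_right _ _)
                _ = (n : ENNReal) := ENNReal.ofReal_natCast n
        _ = (n : ENNReal) * volume B := by simp [mul_comm]
    exact ne_top_of_le_ne_top (by
      exact ENNReal.mul_ne_top (ENNReal.natCast_ne_top n)
        (measure_ball_lt_top).ne) hle
  set a : ℝ := A.toReal with hadef
  have hAa : A = ENNReal.ofReal a := (ENNReal.ofReal_toReal hAfin).symm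
  have ha2 : σ / 2 < a := by
    rw [hAa, ENNReal.ofReal_lt_ofReal_iff_of_nonneg (by linarith)] at hn
    exact hn
  have hapos : 0 < a := by linarith
  set c : ℝ := (σ / 2) / a with hcdef
  have hc0 : 0 < c := by positivity
  have hc1 : c ≤ 1 := by
    rw [hcdef, div_le_one hapos]; linarith
  -- the auxiliary density g
  set g : Plane → ℝ := fun x => B.indicator (fun x => c * min (ρ x) n) x with hgdef
  have hg0 : ∀ x, 0 ≤ g x := by
    intro x
    simp only [hgdef]
    apply Set.indicator_nonneg
    intro x _
    have : 0 ≤ min (ρ x) n := le_min (hρnonneg x) (by positivity)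
    positivity
  have hgρ : ∀ x, g x ≤ ρ x := by
    intro x
    simp only [hgdef]
    by_cases hx : x ∈ B
    · rw [Set.indicator_of_mem hx]
      have h1 : 0 ≤ min (ρ x) n := le_min (hρnonneg x) (by positivity)
      calc c * min (ρ x) n ≤ 1 * min (ρ x) n := by nlinarith
        _ = min (ρ x) n := one_mul _
        _ ≤ ρ x := min_le_left _ _
    · rw [Set.indicator_of_notMem hx]; exact hρnonneg x
  have hgmeas : Measurable g := by
    simp only [hgdef]
    exact (measurable_const.mul (hρmeas.min measurable_const)).indicator
      measurableSet_ball
  have hgsupp : ∀ x, x ∉ B → g x = 0 := by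
    intro x hx; simp only [hgdef]; exact Set.indicator_of_notMem hx _
  have hgint : ∫⁻ x, ENNReal.ofReal (g x) = ENNReal.ofReal (σ / 2) := by
    have h1 : ∀ x, ENNReal.ofReal (g x) =
        B.indicator (fun x => ENNReal.ofReal (c * min (ρ x) n)) x := by
      intro x
      simp only [hgdef]
      by_cases hx : x ∈ B
      · rw [Set.indicator_of_mem hx, Set.indicator_of_mem hx]
      · rw [Set.indicator_of_notMem hx, Set.indicator_of_notMem hx, ENNReal.ofReal_zero]
    simp_rw [h1]
    rw [lintegral_indicator measurableSet_ball]
    have h2 : ∀ x, ENNReal.ofReal (c * min (ρ x) n) =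
        ENNReal.ofReal c * ENNReal.ofReal (min (ρ x) n) := fun x =>
      ENNReal.ofReal_mul hc0.le
    simp_rw [h2]
    rw [lintegral_const_mul _ (hmeas_min n), ← hAdef, hAa, ← ENNReal.ofReal_mul hc0.le]
    congr 1
    rw [hcdef]
    field_simp
  -- pointwise key inequality
  have key : ∀ x y : Plane,
      ENNReal.ofReal (g x) * ENNReal.ofReal (Real.log (1 + ‖y‖) * (u y) ^ 2) ≤
      ENNReal.ofReal (Real.log (1 + ‖x - y‖) * ρ x * (u y) ^ 2) +
        ENNReal.ofReal (g x) * ENNReal.ofReal (Real.log (1 + 2 * r) * (u y) ^ 2) := by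
    intro x y
    by_cases hx : x ∈ B
    · rw [← ENNReal.ofReal_mul (hg0 x), ← ENNReal.ofReal_mul (hg0 x)]
      have hsum : g x * (Real.log (1 + ‖y‖) * (u y) ^ 2) ≤
          Real.log (1 + ‖x - y‖) * ρ x * (u y) ^ 2 +
            g x * (Real.log (1 + 2 * r) * (u y) ^ 2) := by
        have hl := hlog x hx y
        have hu2 : (0:ℝ) ≤ (u y) ^ 2 := sq_nonneg _
        have h1 : g x * Real.log (1 + ‖y‖) ≤
            g x * (Real.log (1 + ‖x - y‖) + Real.log (1 + 2 * r)) :=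
          mul_le_mul_of_nonneg_left hl (hg0 x)
        have h2 : g x * Real.log (1 + ‖x - y‖) ≤ ρ x * Real.log (1 + ‖x - y‖) :=
          mul_le_mul_of_nonneg_right (hgρ x) (hL1nonneg x y)
        nlinarith [mul_le_mul_of_nonneg_right h1 hu2, mul_le_mul_of_nonneg_right h2 hu2]
      calc ENNReal.ofReal (g x * (Real.log (1 + ‖y‖) * (u y) ^ 2)) ≤
          ENNReal.ofReal (Real.log (1 + ‖x - y‖) * ρ x * (u y) ^ 2 +
            g x * (Real.log (1 + 2 * r) * (u y) ^ 2)) := ENNReal.ofReal_le_ofReal hsum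
        _ = _ := ENNReal.ofReal_add (mul_nonneg (mul_nonneg (hL1nonneg x y) (hρnonneg x)) (sq_nonneg _)) (mul_nonneg (hg0 x) (mul_nonneg hL2nonneg (sq_nonneg _)))
    · rw [hgsupp x hx]
      simp
  -- measurability of the double integrand
  have hTmeas : Measurable (Function.uncurry fun x y : Plane =>
      ENNReal.ofReal (Real.log (1 + ‖x - y‖) * ρ x * (u y) ^ 2)) := by
    apply ENNReal.measurable_ofReal.comp
    apply Measurable.mul
    apply Measurable.mul
    · exact Real.measurable_log.comp
        ((continuous_const.add ((continuous_fst.sub continuous_snd).norm)).measurable)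
    · exact hρmeas.comp measurable_fst
    · exact (humeas.comp measurable_snd).pow_const 2
  have hfmeas : Measurable fun y : Plane =>
      ENNReal.ofReal (Real.log (1 + ‖y‖) * (u y) ^ 2) := by
    apply ENNReal.measurable_ofReal.comp
    exact ((Real.measurable_log.comp ((continuous_const.add continuous_norm).measurable)).mul
      (humeas.pow_const 2))
  -- main chain
  calc ENNReal.ofReal (σ / 2) * ∫⁻ y, ENNReal.ofReal (Real.log (1 + ‖y‖) * (u y) ^ 2)
      = ∫⁻ y, ENNReal.ofReal (σ / 2) * ENNReal.ofReal (Real.log (1 + ‖y‖) * (u y) ^ 2) :=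
        (lintegral_const_mul _ hfmeas).symm
    _ = ∫⁻ y, ∫⁻ x, ENNReal.ofReal (g x) * ENNReal.ofReal (Real.log (1 + ‖y‖) * (u y) ^ 2) := by
        congr 1
        funext y
        rw [lintegral_mul_const _ (hgmeas.ennreal_ofReal), hgint]
    _ ≤ ∫⁻ y, ∫⁻ x, (ENNReal.ofReal (Real.log (1 + ‖x - y‖) * ρ x * (u y) ^ 2) +
          ENNReal.ofReal (g x) * ENNReal.ofReal (Real.log (1 + 2 * r) * (u y) ^ 2)) :=
        lintegral_mono fun y => lintegral_mono fun x => key x y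
    _ = ∫⁻ y, ((∫⁻ x, ENNReal.ofReal (Real.log (1 + ‖x - y‖) * ρ x * (u y) ^ 2)) +
          ∫⁻ x, ENNReal.ofReal (g x) * ENNReal.ofReal (Real.log (1 + 2 * r) * (u y) ^ 2)) := by
        congr 1
        funext y
        exact lintegral_add_left (hTmeas.comp (measurable_id.prodMk measurable_const)) _
    _ = (∫⁻ y, ∫⁻ x, ENNReal.ofReal (Real.log (1 + ‖x - y‖) * ρ x * (u y) ^ 2)) +
          ∫⁻ y, ∫⁻ x, ENNReal.ofReal (g x) * ENNReal.ofReal (Real.log (1 + 2 * r) * (u y) ^ 2) :=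
        lintegral_add_left (Measurable.lintegral_prod_left hTmeas) _
    _ = (∫⁻ x, ∫⁻ y, ENNReal.ofReal (Real.log (1 + ‖x - y‖) * ρ x * (u y) ^ 2)) +
          ∫⁻ y, ∫⁻ x, ENNReal.ofReal (g x) * ENNReal.ofReal (Real.log (1 + 2 * r) * (u y) ^ 2) := by
        rw [lintegral_lintegral_swap hTmeas.aemeasurable]
    _ ≤ (∫⁻ x, ∫⁻ y, ENNReal.ofReal (Real.log (1 + ‖x - y‖) * ρ x * (u y) ^ 2)) +
          ENNReal.ofReal (σ / 2 * Real.log (1 + 2 * r)) *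
            ∫⁻ y, ENNReal.ofReal ((u y) ^ 2) := by
        have hS : (∫⁻ y, ∫⁻ x, ENNReal.ofReal (g x) *
            ENNReal.ofReal (Real.log (1 + 2 * r) * (u y) ^ 2)) =
            ENNReal.ofReal (σ / 2 * Real.log (1 + 2 * r)) *
              ∫⁻ y, ENNReal.ofReal ((u y) ^ 2) := by
          calc ∫⁻ y, ∫⁻ x, ENNReal.ofReal (g x) * ENNReal.ofReal (Real.log (1 + 2 * r) * (u y) ^ 2)
              = ∫⁻ y, ENNReal.ofReal (σ / 2) * ENNReal.ofReal (Real.log (1 + 2 * r) * (u y) ^ 2) := by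
                congr 1
                funext y
                rw [lintegral_mul_const _ (hgmeas.ennreal_ofReal), hgint]
            _ = ENNReal.ofReal (σ / 2) * ∫⁻ y, ENNReal.ofReal (Real.log (1 + 2 * r) * (u y) ^ 2) :=
                lintegral_const_mul _ (by
                  exact (measurable_const.mul (humeas.pow_const 2)).ennreal_ofReal)
            _ = ENNReal.ofReal (σ / 2 * Real.log (1 + 2 * r)) *
                  ∫⁻ y, ENNReal.ofReal ((u y) ^ 2) := by
                simp_rw [ENNReal.ofReal_mul hL2nonneg]
                rw [lintegral_const_mul _ ((humeas.pow_const 2).ennreal_ofReal),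
                  ← mul_assoc, ← ENNReal.ofReal_mul (by linarith)]
        rw [hS]
end
end

section
/- Let a > 0 and b > 0, and let (ρ_n)_{n∈ℕ} and (τ_n)_{n∈ℕ} be sequences of nonnegative integrable functions on ℝ² with ∫_{ℝ²} ρ_n dx = a and ∫_{ℝ²} τ_n dx = b for all n. Suppose sup_n ∬_{ℝ²×ℝ²} log(1+|x−y|) ρ_n(x) τ_n(y) dx dy < ∞. Then for every ε > 0 there exists ξ > 0 such that for every r > ξ and every n ∈ ℕ one has sup_{x∈ℝ²} ∫_{B_r(x)} ρ_n(y) dy ≥ a − ε and sup_{x∈ℝ²} ∫_{B_r(x)} τ_n(y) dy ≥ b − ε. -/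
open MeasureTheory

noncomputable section

lemma key_bound (f g : Plane → ℝ) (hf : Integrable f) (hg : Integrable g)
    (hf0 : ∀ x, 0 ≤ f x) (hg0 : ∀ x, 0 ≤ g x)
    (A ε r : ℝ) (hε : 0 ≤ ε) (hr : 0 < r) (hA : ∫ x, f x = A)
    (hfar : ∀ x : Plane, ε ≤ ∫ y in (Metric.ball x r)ᶜ, g y) :
    ENNReal.ofReal (Real.log (1 + r) * ε * A) ≤
      ∫⁻ x, ∫⁻ y, ENNReal.ofReal (Real.log (1 + ‖x - y‖) * f x * g y) := by
  have hlog0 : 0 ≤ Real.log (1 + r) := Real.log_nonneg (by linarith)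
  have hpt : ∀ x : Plane, ENNReal.ofReal (Real.log (1 + r) * ε) * ENNReal.ofReal (f x) ≤
      ∫⁻ y, ENNReal.ofReal (Real.log (1 + ‖x - y‖) * f x * g y) := by
    intro x
    set s := (Metric.ball x r)ᶜ with hs
    have hsm : MeasurableSet s := measurableSet_ball.compl
    have step1 : ∫⁻ y in s, ENNReal.ofReal (Real.log (1 + r) * f x * g y) ≤
        ∫⁻ y, ENNReal.ofReal (Real.log (1 + ‖x - y‖) * f x * g y) := by
      refine le_trans ?_ (setLIntegral_le_lintegral s _)
      refine lintegral_mono_ae ?_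
      filter_upwards [ae_restrict_mem hsm] with y hy
      have hdist : r ≤ ‖x - y‖ := by
        have : ¬ dist y x < r := hy
        have h2 : r ≤ dist y x := not_lt.mp this
        rwa [dist_comm, dist_eq_norm] at h2
      have hlog : Real.log (1 + r) ≤ Real.log (1 + ‖x - y‖) :=
        Real.log_le_log (by linarith) (by linarith)
      exact ENNReal.ofReal_le_ofReal (by
        have := mul_nonneg (hf0 x) (hg0 y)
        nlinarith [hf0 x, hg0 y, mul_nonneg (hf0 x) (hg0 y)])
    have step2 : ENNReal.ofReal (Real.log (1 + r) * ε) * ENNReal.ofReal (f x) ≤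
        ∫⁻ y in s, ENNReal.ofReal (Real.log (1 + r) * f x * g y) := by
      have heq : ∀ y, ENNReal.ofReal (Real.log (1 + r) * f x * g y) =
          ENNReal.ofReal (Real.log (1 + r) * f x) * ENNReal.ofReal (g y) := fun y =>
        ENNReal.ofReal_mul (mul_nonneg hlog0 (hf0 x))
      simp only [heq]
      rw [lintegral_const_mul' _ _ ENNReal.ofReal_ne_top]
      have hgs : ∫⁻ y in s, ENNReal.ofReal (g y) = ENNReal.ofReal (∫ y in s, g y) :=
        (ofReal_integral_eq_lintegral_ofReal (hg.restrict)
          (Filter.Eventually.of_forall fun y => hg0 y)).symm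
      rw [hgs]
      calc ENNReal.ofReal (Real.log (1 + r) * ε) * ENNReal.ofReal (f x)
          = ENNReal.ofReal (Real.log (1 + r) * f x) * ENNReal.ofReal ε := by
            rw [← ENNReal.ofReal_mul (mul_nonneg hlog0 hε),
              ← ENNReal.ofReal_mul (mul_nonneg hlog0 (hf0 x))]
            ring_nf
        _ ≤ ENNReal.ofReal (Real.log (1 + r) * f x) * ENNReal.ofReal (∫ y in s, g y) :=
            mul_le_mul_right (ENNReal.ofReal_le_ofReal (hfar x)) _
    exact le_trans step2 step1
  calc ENNReal.ofReal (Real.log (1 + r) * ε * A)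
      = ENNReal.ofReal (Real.log (1 + r) * ε) * ENNReal.ofReal A := by
        rw [← ENNReal.ofReal_mul (mul_nonneg hlog0 hε)]
    _ = ENNReal.ofReal (Real.log (1 + r) * ε) * ∫⁻ x, ENNReal.ofReal (f x) := by
        rw [← hA, ofReal_integral_eq_lintegral_ofReal hf
          (Filter.Eventually.of_forall fun x => hf0 x)]
    _ = ∫⁻ x, ENNReal.ofReal (Real.log (1 + r) * ε) * ENNReal.ofReal (f x) :=
        (lintegral_const_mul' _ _ ENNReal.ofReal_ne_top).symm
    _ ≤ _ := lintegral_mono hpt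

/-- Boundedness of `∬ log(1+|x-y|) ρ_n(x) τ_n(y)` implies concentration of mass of `ρ_n`
and `τ_n` on large balls, uniformly in `n`. -/
theorem stmt3 (a b : ℝ) (ha : 0 < a) (hb : 0 < b)
    (ρ τ : ℕ → Plane → ℝ)
    (hρnonneg : ∀ n x, 0 ≤ ρ n x) (hτnonneg : ∀ n x, 0 ≤ τ n x)
    (hρint : ∀ n, Integrable (ρ n)) (hτint : ∀ n, Integrable (τ n))
    (hρmass : ∀ n, ∫ x, ρ n x = a) (hτmass : ∀ n, ∫ x, τ n x = b)
    (hB1 : (⨆ n, ∫⁻ x, ∫⁻ y,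
      ENNReal.ofReal (Real.log (1 + ‖x - y‖) * ρ n x * τ n y)) < ⊤) :
    ∀ ε : ℝ, 0 < ε → ∃ ξ : ℝ, 0 < ξ ∧ ∀ r : ℝ, ξ < r → ∀ n : ℕ,
      a - ε ≤ (⨆ x : Plane, ∫ y in Metric.ball x r, ρ n y) ∧
      b - ε ≤ (⨆ x : Plane, ∫ y in Metric.ball x r, τ n y) := by
  intro ε hε
  set S := (⨆ n, ∫⁻ x, ∫⁻ y,
      ENNReal.ofReal (Real.log (1 + ‖x - y‖) * ρ n x * τ n y)) with hS
  set C := S.toReal with hC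
  have hC0 : 0 ≤ C := ENNReal.toReal_nonneg
  have hSC : S = ENNReal.ofReal C := (ENNReal.ofReal_toReal hB1.ne).symm
  set m := min a b with hm
  have hm0 : 0 < m := lt_min ha hb
  refine ⟨Real.exp (C / (ε * m)), Real.exp_pos _, fun r hr n => ?_⟩
  have hξ1 : 1 ≤ Real.exp (C / (ε * m)) :=
    Real.one_le_exp (div_nonneg hC0 (le_of_lt (mul_pos hε hm0)))
  have hr1 : 1 < r := lt_of_le_of_lt hξ1 hr
  have hr0 : 0 < r := by linarith
  have hlogr : C / (ε * m) < Real.log (1 + r) := by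
    calc C / (ε * m) = Real.log (Real.exp (C / (ε * m))) := (Real.log_exp _).symm
      _ < Real.log (1 + r) := Real.log_lt_log (Real.exp_pos _) (by linarith)
  have hClt : C < Real.log (1 + r) * (ε * m) := by
    rw [div_lt_iff₀ (mul_pos hε hm0)] at hlogr
    exact hlogr
  have hlogpos : 0 < Real.log (1 + r) := Real.log_pos (by linarith)
  -- the double integral for n is at most ofReal C
  have hDn : (∫⁻ x, ∫⁻ y,
      ENNReal.ofReal (Real.log (1 + ‖x - y‖) * ρ n x * τ n y)) ≤ ENNReal.ofReal C := by
    rw [← hSC]; exact le_iSup (fun n => ∫⁻ x, ∫⁻ y,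
      ENNReal.ofReal (Real.log (1 + ‖x - y‖) * ρ n x * τ n y)) n
  -- measurability for the swap
  have hmeas : AEMeasurable (Function.uncurry fun x y =>
      ENNReal.ofReal (Real.log (1 + ‖x - y‖) * ρ n x * τ n y))
      ((volume : Measure Plane).prod volume) := by
    have h1 : Measurable fun p : Plane × Plane => Real.log (1 + ‖p.1 - p.2‖) :=
      Real.measurable_log.comp
        ((continuous_const.add ((continuous_fst.sub continuous_snd).norm)).measurable)
    have h2 : AEMeasurable (fun p : Plane × Plane => ρ n p.1)
        ((volume : Measure Plane).prod volume) :=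
      AEMeasurable.comp_fst (hρint n).aemeasurable
    have h3 : AEMeasurable (fun p : Plane × Plane => τ n p.2)
        ((volume : Measure Plane).prod volume) :=
      AEMeasurable.comp_snd (hτint n).aemeasurable
    exact ((h1.aemeasurable.mul h2).mul h3).ennreal_ofReal
  constructor
  · -- ρ concentration
    by_contra hcon
    push_neg at hcon
    have hbdd : BddAbove (Set.range fun x : Plane => ∫ y in Metric.ball x r, ρ n y) := by
      refine ⟨a, ?_⟩
      rintro _ ⟨x, rfl⟩
      rw [← hρmass n]
      exact setIntegral_le_integral (hρint n)
        (Filter.Eventually.of_forall fun y => hρnonneg n y)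
    have hfar : ∀ x : Plane, ε ≤ ∫ y in (Metric.ball x r)ᶜ, ρ n y := by
      intro x
      have h1 : (∫ y in Metric.ball x r, ρ n y) ≤ a - ε :=
        le_of_lt (lt_of_le_of_lt (le_ciSup hbdd x) hcon)
      have h2 : (∫ y in Metric.ball x r, ρ n y) + ∫ y in (Metric.ball x r)ᶜ, ρ n y = a := by
        rw [integral_add_compl measurableSet_ball (hρint n), hρmass n]
      linarith
    have hkey := key_bound (τ n) (ρ n) (hτint n) (hρint n) (hτnonneg n) (hρnonneg n)
      b ε r hε.le hr0 (hτmass n) hfar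
    have heq : (∫⁻ x, ∫⁻ y,
        ENNReal.ofReal (Real.log (1 + ‖x - y‖) * τ n x * ρ n y)) =
        ∫⁻ y, ∫⁻ x, ENNReal.ofReal (Real.log (1 + ‖x - y‖) * ρ n x * τ n y) := by
      refine lintegral_congr fun x => lintegral_congr fun y => ?_
      rw [norm_sub_rev]
      congr 1
      ring
    rw [heq, ← lintegral_lintegral_swap hmeas] at hkey
    have hfin : Real.log (1 + r) * ε * b ≤ C :=
      (ENNReal.ofReal_le_ofReal_iff hC0).mp (le_trans hkey hDn)
    have hmb : m ≤ b := min_le_right a b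
    nlinarith [mul_pos hlogpos hε]
  · -- τ concentration
    by_contra hcon
    push_neg at hcon
    have hbdd : BddAbove (Set.range fun x : Plane => ∫ y in Metric.ball x r, τ n y) := by
      refine ⟨b, ?_⟩
      rintro _ ⟨x, rfl⟩
      rw [← hτmass n]
      exact setIntegral_le_integral (hτint n)
        (Filter.Eventually.of_forall fun y => hτnonneg n y)
    have hfar : ∀ x : Plane, ε ≤ ∫ y in (Metric.ball x r)ᶜ, τ n y := by
      intro x
      have h1 : (∫ y in Metric.ball x r, τ n y) ≤ b - ε :=
        le_of_lt (lt_of_le_of_lt (le_ciSup hbdd x) hcon)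
      have h2 : (∫ y in Metric.ball x r, τ n y) + ∫ y in (Metric.ball x r)ᶜ, τ n y = b := by
        rw [integral_add_compl measurableSet_ball (hτint n), hτmass n]
      linarith
    have hkey := key_bound (ρ n) (τ n) (hρint n) (hτint n) (hρnonneg n) (hτnonneg n)
      a ε r hε.le hr0 (hρmass n) hfar
    have hfin : Real.log (1 + r) * ε * a ≤ C :=
      (ENNReal.ofReal_le_ofReal_iff hC0).mp (le_trans hkey hDn)
    have hma : m ≤ a := min_le_left a b
    nlinarith [mul_pos hlogpos hε]
end
end

section
/- Let A, B, C > 0 and q > 1, and define f, g : (0,∞) → ℝ by f(t) = A t − B/t − C t^q and g(t) = A t² + B − C q t^{q+1}. Then the following are equivalent: (a) there exist real numbers t⁺, t̄, t⁻ with 0 < t⁺ < t̄ < t⁻ such that f(t⁺) = f(t⁻) = 0, f′(t⁺) > 0, f′(t⁻) < 0, g(t) > 0 for all t ∈ (0, t̄), and g(t) < 0 for all t ∈ (t̄, ∞); (b) ((q−1)^{(q−1)/2} / (q+1)^{(q+1)/2}) · A^{(q+1)/2} / B^{(q−1)/2} > C/2. -/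
noncomputable section

open Real Set


-- derivative lemma
lemma aux_deriv (A B C q : ℝ) (hq : 1 < q) {t : ℝ} (ht : 0 < t) :
    HasDerivAt (fun t : ℝ => A * t - B / t - C * t ^ q)
      ((A * t ^ 2 + B - C * q * t ^ (q + 1)) / t ^ 2) t := by
  have h1 : HasDerivAt (fun t : ℝ => A * t - B * t⁻¹ - C * t ^ q)
      (A * 1 - B * (-(t ^ 2)⁻¹) - C * (q * t ^ (q - 1))) t :=
    (((hasDerivAt_id t).const_mul A).sub ((hasDerivAt_inv ht.ne').const_mul B)).sub
      ((Real.hasDerivAt_rpow_const (Or.inl ht.ne')).const_mul C)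
  have hfun : (fun t : ℝ => A * t - B / t - C * t ^ q)
      = (fun t : ℝ => A * t - B * t⁻¹ - C * t ^ q) := by
    funext x; rw [div_eq_mul_inv]
  rw [hfun]
  convert h1 using 1
  have hexp : t ^ (q - 1) * t ^ 2 = t ^ (q + 1) := by
    rw [← Real.rpow_natCast t 2, ← Real.rpow_add ht]
    congr 1; ring
  have ht2 : (t:ℝ) ^ 2 ≠ 0 := by positivity
  field_simp
  linear_combination (C*q) * hexp

-- g factorization
lemma aux_gfact (A B C q : ℝ) {t : ℝ} (ht : 0 < t) :
    A * t ^ 2 + B - C * q * t ^ (q + 1)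
      = t ^ (q + 1) * (A * t ^ (1 - q) + B * t ^ (-1 - q) - C * q) := by
  have h1 : t ^ (q + 1) * t ^ (1 - q) = t ^ 2 := by
    rw [← Real.rpow_natCast t 2, ← Real.rpow_add ht]; congr 1; ring
  have h2 : t ^ (q + 1) * t ^ (-1 - q) = 1 := by
    rw [← Real.rpow_add ht]
    have : q + 1 + (-1 - q) = 0 := by ring
    rw [this, Real.rpow_zero]
  linear_combination (-A) * h1 + (-B) * h2

-- f times t
lemma aux_ffact (A B C q : ℝ) {t : ℝ} (ht : 0 < t) :
    t * (A * t - B / t - C * t ^ q) = A * t ^ 2 - B - C * t ^ (q + 1) := by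
  have h1 : t ^ q * t = t ^ (q + 1) := by
    nth_rewrite 2 [← Real.rpow_one t]
    rw [← Real.rpow_add ht]
  have : t * (B / t) = B := by field_simp
  linear_combination (-C) * h1 - this

lemma aux_F1 (A B q : ℝ) (hA : 0 < A) (hB : 0 < B) (hq : 1 < q) {t : ℝ} (ht : 0 < t) :
    A * t ^ 2 - B ≤ 2 * ((q - 1) ^ ((q - 1) / 2) / (q + 1) ^ ((q + 1) / 2) *
      (A ^ ((q + 1) / 2) / B ^ ((q - 1) / 2))) * t ^ (q + 1) := by
  have hq1 : (0:ℝ) < q - 1 := by linarith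
  have hq1' : (0:ℝ) < q + 1 := by linarith
  set p : ℝ := (q + 1) / 2 with hpdef
  set p' : ℝ := (q + 1) / (q - 1) with hp'def
  have hp0 : 0 < p := by positivity
  have hp'0 : 0 < p' := by positivity
  have hpq : p.HolderConjugate p' := by
    rw [Real.holderConjugate_iff]
    constructor
    · rw [hpdef]; linarith
    · rw [hpdef, hp'def]; field_simp; ring
  set c : ℝ := (B * p') ^ (1 / p') with hc
  have hBp' : 0 < B * p' := by positivity
  have hc0 : 0 < c := Real.rpow_pos_of_pos hBp' _
  have key := Real.young_inequality_of_nonneg (a := A * t ^ 2 / c) (b := c)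
    (by positivity) hc0.le hpq
  have hterm0 : A * t ^ 2 / c * c = A * t ^ 2 := div_mul_cancel₀ _ hc0.ne'
  have hcp' : c ^ p' / p' = B := by
    rw [hc, ← Real.rpow_mul hBp'.le, one_div_mul_cancel hp'0.ne', Real.rpow_one,
      mul_div_assoc, div_self hp'0.ne', mul_one]
  have hsplit : A * t ^ 2 / c = A / c * t ^ 2 := by ring
  have hap : (A * t ^ 2 / c) ^ p = (A / c) ^ p * t ^ (q + 1) := by
    rw [hsplit, Real.mul_rpow (by positivity) (by positivity),
      ← Real.rpow_natCast t 2, ← Real.rpow_mul ht.le]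
    congr 2
    push_cast; rw [hpdef]; ring
  have hconst : (A / c) ^ p / p = 2 * ((q - 1) ^ ((q - 1) / 2) / (q + 1) ^ ((q + 1) / 2) *
      (A ^ ((q + 1) / 2) / B ^ ((q - 1) / 2))) := by
    have hL : 0 < (A / c) ^ p / p := by positivity
    have hR : 0 < 2 * ((q - 1) ^ ((q - 1) / 2) / (q + 1) ^ ((q + 1) / 2) *
      (A ^ ((q + 1) / 2) / B ^ ((q - 1) / 2))) := by positivity
    apply Real.log_injOn_pos (mem_Ioi.2 hL) (mem_Ioi.2 hR)
    rw [Real.log_div (by positivity) hp0.ne', Real.log_rpow (by positivity),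
      Real.log_div hA.ne' hc0.ne', hc, Real.log_rpow hBp',
      Real.log_mul hB.ne' hp'0.ne', hp'def,
      Real.log_div hq1'.ne' hq1.ne', hpdef, Real.log_div hq1'.ne' two_ne_zero,
      Real.log_mul two_ne_zero (by positivity),
      Real.log_mul (by positivity) (by positivity),
      Real.log_div (by positivity) (by positivity),
      Real.log_div (by positivity) (by positivity),
      Real.log_rpow hq1, Real.log_rpow hq1', Real.log_rpow hA, Real.log_rpow hB]
    have e1 : (1:ℝ) / ((q + 1) / (q - 1)) = (q - 1) / (q + 1) := one_div_div _ _
    rw [e1]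
    field_simp
    ring
  calc A * t ^ 2 - B = A * t ^ 2 / c * c - B := by rw [hterm0]
    _ ≤ (A * t ^ 2 / c) ^ p / p + c ^ p' / p' - B := by linarith [key]
    _ = (A / c) ^ p / p * t ^ (q + 1) := by rw [hcp', hap]; ring
    _ = _ := by rw [hconst]

lemma aux_F2 (A B q : ℝ) (hA : 0 < A) (hB : 0 < B) (hq : 1 < q) :
    A * (B * (q + 1) / (A * (q - 1))) - B
      = 2 * ((q - 1) ^ ((q - 1) / 2) / (q + 1) ^ ((q + 1) / 2) *
        (A ^ ((q + 1) / 2) / B ^ ((q - 1) / 2))) * (B * (q + 1) / (A * (q - 1))) ^ ((q + 1) / 2) := by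
  have hq1 : (0:ℝ) < q - 1 := by linarith
  have hq1' : (0:ℝ) < q + 1 := by linarith
  have hs : (0:ℝ) < B * (q + 1) / (A * (q - 1)) := by positivity
  have hL : A * (B * (q + 1) / (A * (q - 1))) - B = 2 * B / (q - 1) := by
    field_simp; ring
  rw [hL]
  apply Real.log_injOn_pos (mem_Ioi.2 (by positivity)) (mem_Ioi.2 (by positivity))
  rw [Real.log_div (by positivity) hq1.ne', Real.log_mul two_ne_zero hB.ne',
    Real.log_mul (by positivity) (Real.rpow_pos_of_pos hs _).ne',
    Real.log_mul two_ne_zero (by positivity),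
    Real.log_mul (by positivity) (by positivity),
    Real.log_div (by positivity) (by positivity),
    Real.log_div (by positivity) (by positivity),
    Real.log_rpow hs, Real.log_div (by positivity) (by positivity),
    Real.log_mul hB.ne' hq1'.ne', Real.log_mul hA.ne' hq1.ne',
    Real.log_rpow hq1, Real.log_rpow hq1', Real.log_rpow hA, Real.log_rpow hB]
  ring

set_option maxHeartbeats 1000000 in
/-- Characterization of the two-zero structure of `f(t) = At − B/t − Ct^q` and the sign
change of `g(t) = At² + B − Cq t^{q+1}` in terms of the inequality
`((q−1)^{(q−1)/2}/(q+1)^{(q+1)/2})·A^{(q+1)/2}/B^{(q−1)/2} > C/2`. -/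
theorem stmt14 (A B C q : ℝ) (hA : 0 < A) (hB : 0 < B) (hC : 0 < C) (hq : 1 < q) :
    (∃ tp tb tm : ℝ, 0 < tp ∧ tp < tb ∧ tb < tm ∧
      A * tp - B / tp - C * tp ^ q = 0 ∧
      A * tm - B / tm - C * tm ^ q = 0 ∧
      0 < deriv (fun t : ℝ => A * t - B / t - C * t ^ q) tp ∧
      deriv (fun t : ℝ => A * t - B / t - C * t ^ q) tm < 0 ∧
      (∀ t : ℝ, 0 < t → t < tb → 0 < A * t ^ 2 + B - C * q * t ^ (q + 1)) ∧
      (∀ t : ℝ, tb < t → A * t ^ 2 + B - C * q * t ^ (q + 1) < 0)) ↔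
    C / 2 < (q - 1) ^ ((q - 1) / 2) / (q + 1) ^ ((q + 1) / 2) *
      (A ^ ((q + 1) / 2) / B ^ ((q - 1) / 2)) := by
  have hq1 : (0:ℝ) < q - 1 := by linarith
  have hq1' : (0:ℝ) < q + 1 := by linarith
  set R : ℝ := (q - 1) ^ ((q - 1) / 2) / (q + 1) ^ ((q + 1) / 2) *
      (A ^ ((q + 1) / 2) / B ^ ((q - 1) / 2)) with hRdef
  have hR0 : 0 < R := by positivity
  -- continuity helpers
  have hcontF : ∀ a b : ℝ, 0 < a →
      ContinuousOn (fun t : ℝ => A * t ^ 2 - B - C * t ^ (q + 1)) (Icc a b) := by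
    intro a b ha t ht
    have ht0 : (0:ℝ) < t := lt_of_lt_of_le ha ht.1
    exact (((continuous_const.mul (continuous_pow 2)).continuousAt.sub
      continuousAt_const).sub (continuousAt_const.mul
      (Real.continuousAt_rpow_const t (q + 1) (Or.inl ht0.ne')))).continuousWithinAt
  have hcontk : ∀ a b : ℝ, 0 < a →
      ContinuousOn (fun t : ℝ => A * t ^ (1 - q) + B * t ^ (-1 - q)) (Icc a b) := by
    intro a b ha t ht
    have ht0 : (0:ℝ) < t := lt_of_lt_of_le ha ht.1
    exact ((continuousAt_const.mul
      (Real.continuousAt_rpow_const t (1 - q) (Or.inl ht0.ne'))).add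
      (continuousAt_const.mul
      (Real.continuousAt_rpow_const t (-1 - q) (Or.inl ht0.ne')))).continuousWithinAt
  -- strict antitonicity of k
  have hkanti : ∀ x y : ℝ, 0 < x → x < y →
      A * y ^ (1 - q) + B * y ^ (-1 - q) < A * x ^ (1 - q) + B * x ^ (-1 - q) := by
    intro x y hx hxy
    have h1 := Real.rpow_lt_rpow_of_neg hx hxy (by linarith : 1 - q < 0)
    have h2 := Real.rpow_lt_rpow_of_neg hx hxy (by linarith : -1 - q < 0)
    exact add_lt_add (mul_lt_mul_of_pos_left h1 hA) (mul_lt_mul_of_pos_left h2 hB)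
  constructor
  · rintro ⟨tp, tb, tm, htp0, htpb, htbm, hfp, hfm, hdp, hdm, hg1, hg2⟩
    have htb0 : 0 < tb := htp0.trans htpb
    have hmono : StrictMonoOn (fun t : ℝ => A * t - B / t - C * t ^ q) (Icc tp tb) := by
      apply strictMonoOn_of_deriv_pos (convex_Icc _ _)
      · intro x hx
        have hx0 : 0 < x := lt_of_lt_of_le htp0 hx.1
        exact (((continuous_const.mul continuous_id).continuousAt.sub
          (continuousAt_const.div continuousAt_id hx0.ne')).sub
          (continuousAt_const.mul
          (Real.continuousAt_rpow_const x q (Or.inl hx0.ne')))).continuousWithinAt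
      · intro x hx
        rw [interior_Icc] at hx
        have hx0 : 0 < x := htp0.trans hx.1
        rw [(aux_deriv A B C q hq hx0).deriv]
        exact div_pos (hg1 x hx0 hx.2) (by positivity)
    have hlt : (A * tp - B / tp - C * tp ^ q) < (A * tb - B / tb - C * tb ^ q) :=
      hmono ⟨le_refl tp, htpb.le⟩ ⟨htpb.le, le_refl tb⟩ htpb
    rw [hfp] at hlt
    have h1 : 0 < A * tb ^ 2 - B - C * tb ^ (q + 1) := by
      rw [← aux_ffact A B C q htb0]
      exact mul_pos htb0 hlt
    have h2 := aux_F1 A B q hA hB hq htb0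
    rw [← hRdef] at h2
    have h3 : C * tb ^ (q + 1) < 2 * R * tb ^ (q + 1) := by linarith
    have h4 : C < 2 * R :=
      lt_of_mul_lt_mul_right h3 (Real.rpow_pos_of_pos htb0 _).le
    linarith
  · intro hCR
    have hC2R : C < 2 * R := by linarith
    set T : ℝ := Real.sqrt (B * (q + 1) / (A * (q - 1))) with hTdef
    have hs0 : (0:ℝ) < B * (q + 1) / (A * (q - 1)) := by positivity
    have hT0 : 0 < T := Real.sqrt_pos.2 hs0
    have hT2 : T ^ 2 = B * (q + 1) / (A * (q - 1)) := Real.sq_sqrt hs0.le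
    have hTq : T ^ (q + 1) = (B * (q + 1) / (A * (q - 1))) ^ ((q + 1) / 2) := by
      rw [hTdef, Real.sqrt_eq_rpow, ← Real.rpow_mul hs0.le]
      congr 1; ring
    have hTq0 : 0 < T ^ (q + 1) := Real.rpow_pos_of_pos hT0 _
    have hF2' : A * T ^ 2 - B = 2 * R * T ^ (q + 1) := by
      rw [hT2, hTq, hRdef]; exact aux_F2 A B q hA hB hq
    have hFT : 0 < A * T ^ 2 - B - C * T ^ (q + 1) := by
      have h5 := mul_pos (by linarith : (0:ℝ) < 2 * R - C) hTq0
      rw [sub_mul] at h5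
      linarith [hF2']
    -- construct tp
    set t2 : ℝ := min (T / 2) (Real.sqrt (B / A) / 2) with ht2def
    have ht20 : 0 < t2 := lt_min (by positivity) (by positivity)
    have ht2T : t2 < T := (min_le_left _ _).trans_lt (by linarith)
    have hAt2 : A * t2 ^ 2 < B := by
      have h6 : t2 ≤ Real.sqrt (B / A) / 2 := min_le_right _ _
      have h7 : (Real.sqrt (B / A)) ^ 2 = B / A := Real.sq_sqrt (by positivity)
      have h7' : A * ((Real.sqrt (B / A) / 2) ^ 2) = B / 4 := by
        rw [div_pow, h7]; field_simp; ring
      have h6' := mul_le_mul_of_nonneg_left (pow_le_pow_left₀ ht20.le h6 2) hA.le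
      have : 0 < B / 4 := by positivity
      have : B / 4 + B / 4 ≤ B := by linarith
      linarith
    have hFt2 : A * t2 ^ 2 - B - C * t2 ^ (q + 1) < 0 := by
      have : 0 < C * t2 ^ (q + 1) := by positivity
      linarith
    obtain ⟨tp, htpmem, hFtp⟩ := intermediate_value_Icc ht2T.le (hcontF t2 T ht20)
      ⟨hFt2.le, hFT.le⟩
    simp only at hFtp
    have htp0 : 0 < tp := lt_of_lt_of_le ht20 htpmem.1
    have htpT : tp < T := lt_of_le_of_ne htpmem.2 (by
      rintro rfl; exact absurd hFtp hFT.ne')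
    have hfp : A * tp - B / tp - C * tp ^ q = 0 := by
      have h8 : tp * (A * tp - B / tp - C * tp ^ q) = 0 := by
        rw [aux_ffact A B C q htp0]; exact hFtp
      exact (mul_eq_zero.mp h8).resolve_left htp0.ne'
    -- construct tm
    set y : ℝ := (A / C) ^ (1 / (q - 1)) with hydef
    set t3 : ℝ := max (T + 1) (y + 1) with ht3def
    have hTt3 : T < t3 := lt_of_lt_of_le (lt_add_one T) (le_max_left _ _)
    have hyt3 : y < t3 := lt_of_lt_of_le (lt_add_one y) (le_max_right _ _)
    have ht30 : 0 < t3 := hT0.trans hTt3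
    have hy0 : 0 < y := Real.rpow_pos_of_pos (by positivity) _
    have hyq : y ^ (q - 1) = A / C := by
      rw [hydef, ← Real.rpow_mul (by positivity : (0:ℝ) ≤ A / C),
        one_div_mul_cancel hq1.ne', Real.rpow_one]
    have h3q : A < C * t3 ^ (q - 1) := by
      have h9 : y ^ (q - 1) < t3 ^ (q - 1) := Real.rpow_lt_rpow hy0.le hyt3 hq1
      rw [hyq] at h9
      calc A = C * (A / C) := by field_simp
        _ < C * t3 ^ (q - 1) := mul_lt_mul_of_pos_left h9 hC
    have ht3split : C * t3 ^ (q + 1) = C * t3 ^ (q - 1) * t3 ^ 2 := by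
      have : t3 ^ (q - 1) * t3 ^ 2 = t3 ^ (q + 1) := by
        rw [← Real.rpow_natCast t3 2, ← Real.rpow_add ht30]; congr 1; push_cast; ring
      rw [← this]; ring
    have hFt3 : A * t3 ^ 2 - B - C * t3 ^ (q + 1) < 0 := by
      have h10 : A * t3 ^ 2 < C * t3 ^ (q - 1) * t3 ^ 2 :=
        mul_lt_mul_of_pos_right h3q (by positivity)
      linarith [ht3split]
    obtain ⟨tm, htmmem, hFtm⟩ := intermediate_value_Icc' hTt3.le (hcontF T t3 hT0)
      ⟨hFt3.le, hFT.le⟩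
    simp only at hFtm
    have htm0 : 0 < tm := lt_of_lt_of_le hT0 htmmem.1
    have hTtm : T < tm := lt_of_le_of_ne htmmem.1 (by
      rintro rfl; exact absurd hFtm hFT.ne')
    have hfm : A * tm - B / tm - C * tm ^ q = 0 := by
      have h8 : tm * (A * tm - B / tm - C * tm ^ q) = 0 := by
        rw [aux_ffact A B C q htm0]; exact hFtm
      exact (mul_eq_zero.mp h8).resolve_left htm0.ne'
    -- g at tp and tm
    have hsq : A * (q - 1) * T ^ 2 = B * (q + 1) := by
      rw [hT2]; field_simp
    have hgtp : 0 < A * tp ^ 2 + B - C * q * tp ^ (q + 1) := by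
      have h11 : C * q * tp ^ (q + 1) = q * (A * tp ^ 2 - B) := by
        linear_combination (-q) * hFtp
      have h12 : tp ^ 2 < T ^ 2 := sq_lt_sq' (by linarith) htpT
      have h18 : A * (q - 1) * tp ^ 2 < A * (q - 1) * T ^ 2 :=
        mul_lt_mul_of_pos_left h12 (by positivity)
      linarith [h11, h18, hsq]
    have hgtm : A * tm ^ 2 + B - C * q * tm ^ (q + 1) < 0 := by
      have h11 : C * q * tm ^ (q + 1) = q * (A * tm ^ 2 - B) := by
        linear_combination (-q) * hFtm
      have h12 : T ^ 2 < tm ^ 2 := sq_lt_sq' (by linarith) hTtm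
      have h18 : A * (q - 1) * T ^ 2 < A * (q - 1) * tm ^ 2 :=
        mul_lt_mul_of_pos_left h12 (by positivity)
      linarith [h11, h18, hsq]
    -- k at tp and tm
    have hktp : C * q < A * tp ^ (1 - q) + B * tp ^ (-1 - q) := by
      have h13 := aux_gfact A B C q htp0
      have h14 : 0 < tp ^ (q + 1) := Real.rpow_pos_of_pos htp0 _
      have h17 : 0 < tp ^ (q + 1) * (A * tp ^ (1 - q) + B * tp ^ (-1 - q) - C * q) :=
        h13 ▸ hgtp
      rcases mul_pos_iff.mp h17 with ⟨_, h⟩ | ⟨h, _⟩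
      · linarith
      · linarith
    have hktm : A * tm ^ (1 - q) + B * tm ^ (-1 - q) < C * q := by
      have h13 := aux_gfact A B C q htm0
      have h14 : 0 < tm ^ (q + 1) := Real.rpow_pos_of_pos htm0 _
      have h17 : tm ^ (q + 1) * (A * tm ^ (1 - q) + B * tm ^ (-1 - q) - C * q) < 0 :=
        h13 ▸ hgtm
      rcases mul_neg_iff.mp h17 with ⟨_, h⟩ | ⟨h, _⟩
      · linarith
      · linarith
    -- construct tb
    have htptm : tp < tm := htpT.trans hTtm
    obtain ⟨tb, htbmem, hktb⟩ := intermediate_value_Icc' htptm.le (hcontk tp tm htp0)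
      ⟨hktm.le, hktp.le⟩
    simp only at hktb
    have htptb : tp < tb := lt_of_le_of_ne htbmem.1 (by
      rintro rfl; rw [hktb] at hktp; exact lt_irrefl _ hktp)
    have htbtm : tb < tm := lt_of_le_of_ne htbmem.2 (by
      rintro rfl; rw [hktb] at hktm; exact lt_irrefl _ hktm)
    have htb0 : 0 < tb := htp0.trans htptb
    refine ⟨tp, tb, tm, htp0, htptb, htbtm, hfp, hfm, ?_, ?_, ?_, ?_⟩
    · rw [(aux_deriv A B C q hq htp0).deriv]
      exact div_pos hgtp (by positivity)
    · rw [(aux_deriv A B C q hq htm0).deriv]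
      exact div_neg_of_neg_of_pos hgtm (by positivity)
    · intro t ht htlt
      rw [aux_gfact A B C q ht]
      have h15 : A * tb ^ (1 - q) + B * tb ^ (-1 - q)
          < A * t ^ (1 - q) + B * t ^ (-1 - q) := hkanti t tb ht htlt
      have h16 : 0 < A * t ^ (1 - q) + B * t ^ (-1 - q) - C * q := by
        linarith [hktb]
      exact mul_pos (Real.rpow_pos_of_pos ht _) h16
    · intro t htlt
      have ht : 0 < t := htb0.trans htlt
      rw [aux_gfact A B C q ht]
      have h15 : A * t ^ (1 - q) + B * t ^ (-1 - q)
          < A * tb ^ (1 - q) + B * tb ^ (-1 - q) := hkanti tb t htb0 htlt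
      have h16 : A * t ^ (1 - q) + B * t ^ (-1 - q) - C * q < 0 := by
        linarith [hktb]
      exact mul_neg_of_pos_of_neg (Real.rpow_pos_of_pos ht _) h16
end
end

section
/- Let A, B, C > 0, q > 1, and W ∈ ℝ, and suppose ((q−1)^{(q−1)/2} / (q+1)^{(q+1)/2}) · A^{(q+1)/2} / B^{(q−1)/2} > C/2. Define F : (0,∞) → ℝ by F(t) = (1/2) A t² − B log t − (C/(q+1)) t^{q+1} + W. Then there exist t⁺, t⁻ ∈ (0,∞) with t⁺ < t⁻ such that F′(t⁺) = F′(t⁻) = 0, F′(t) ≠ 0 for every t ∈ (0,∞) with t ≠ t⁺ and t ≠ t⁻, t⁺ is a local minimum point of F, t⁻ is a local maximum point of F, and F(t⁺) < F(t⁻). -/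
noncomputable section

open Real Set Filter

def Ffib (A B C q W : ℝ) : ℝ → ℝ :=
  fun t => (1 / 2) * A * t ^ 2 - B * Real.log t - C / (q + 1) * t ^ (q + 1) + W

lemma Ffib_hasDerivAt (A B C q W : ℝ) (hq : q + 1 ≠ 0) {t : ℝ} (ht : 0 < t) :
    HasDerivAt (Ffib A B C q W) (A * t - B / t - C * t ^ q) t := by
  have h1 : HasDerivAt (fun t : ℝ => (1/2) * A * t ^ 2) (A * t) t := by
    have := (hasDerivAt_pow 2 t).const_mul ((1/2) * A)
    refine this.congr_deriv ?_
    push_cast; ring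
  have h2 : HasDerivAt (fun t : ℝ => B * Real.log t) (B / t) t := by
    simpa [div_eq_mul_inv] using (Real.hasDerivAt_log ht.ne').const_mul B
  have h3 : HasDerivAt (fun t : ℝ => C / (q+1) * t ^ (q+1)) (C * t ^ q) t := by
    have := (Real.hasDerivAt_rpow_const (p := q+1) (Or.inl ht.ne')).const_mul (C/(q+1))
    refine this.congr_deriv ?_
    rw [show q + 1 - 1 = q by ring]
    field_simp
  exact ((h1.sub h2).sub h3).add_const W

/-- Under the strict inequality condition, `F` has exactly two critical points on `(0,∞)`:
a local minimizer `t⁺` and a local maximizer `t⁻` with `t⁺ < t⁻` and `F(t⁺) < F(t⁻)`. -/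
theorem stmt15 (A B C q W : ℝ) (hA : 0 < A) (hB : 0 < B) (hC : 0 < C) (hq : 1 < q)
    (hcond : C / 2 < (q - 1) ^ ((q - 1) / 2) / (q + 1) ^ ((q + 1) / 2) *
      (A ^ ((q + 1) / 2) / B ^ ((q - 1) / 2))) :
    ∃ tp tm : ℝ, 0 < tp ∧ tp < tm ∧
      deriv (Ffib A B C q W) tp = 0 ∧ deriv (Ffib A B C q W) tm = 0 ∧
      (∀ t : ℝ, 0 < t → t ≠ tp → t ≠ tm → deriv (Ffib A B C q W) t ≠ 0) ∧
      IsLocalMin (Ffib A B C q W) tp ∧ IsLocalMax (Ffib A B C q W) tm ∧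
      Ffib A B C q W tp < Ffib A B C q W tm := by
  have hq1 : (0:ℝ) < q - 1 := by linarith
  have hq2 : (0:ℝ) < q + 1 := by linarith
  set F := Ffib A B C q W with hF
  set g : ℝ → ℝ := fun t => A * t ^ 2 - B - C * t ^ (q + 1) with hg
  -- derivative of F in terms of g
  have hFderiv : ∀ t : ℝ, 0 < t → deriv F t = g t / t := by
    intro t ht
    rw [(Ffib_hasDerivAt A B C q W hq2.ne' ht).deriv]
    have hpow : t ^ (q + 1) = t ^ q * t := by
      rw [Real.rpow_add ht, Real.rpow_one]
    simp only [hg, hpow]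
    field_simp
  -- derivative of g
  have hgderiv : ∀ t : ℝ, 0 < t →
      HasDerivAt g (2 * A * t - C * (q + 1) * t ^ q) t := by
    intro t ht
    have h1 : HasDerivAt (fun t : ℝ => A * t ^ 2) (2 * A * t) t := by
      have := (hasDerivAt_pow 2 t).const_mul A
      refine this.congr_deriv ?_
      push_cast; ring
    have h3 : HasDerivAt (fun t : ℝ => C * t ^ (q+1)) (C * (q + 1) * t ^ q) t := by
      have := (Real.hasDerivAt_rpow_const (p := q+1) (Or.inl ht.ne')).const_mul C
      refine this.congr_deriv ?_
      rw [show q + 1 - 1 = q by ring]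
      ring
    exact ((h1.sub_const B).sub h3)
  -- the critical point of g
  set r : ℝ := 2 * A / (C * (q + 1)) with hr
  have hrpos : 0 < r := by positivity
  set ts : ℝ := r ^ (q - 1)⁻¹ with hts
  have htspos : 0 < ts := Real.rpow_pos_of_pos hrpos _
  have hts_pow : ts ^ (q - 1) = r := Real.rpow_inv_rpow hrpos.le hq1.ne'
  -- sign of g'
  have hgderiv_sign : ∀ t : ℝ, 0 < t →
      (2 * A * t - C * (q + 1) * t ^ q) = C * (q + 1) * t * (r - t ^ (q - 1)) := by
    intro t ht
    have hpow : t ^ q = t ^ (q - 1) * t := by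
      rw [show q = (q - 1) + 1 by ring, Real.rpow_add ht, Real.rpow_one]
      ring_nf
    rw [hpow, hr]
    field_simp
  have hlt_iff : ∀ t : ℝ, 0 < t → (t ^ (q - 1) < r ↔ t < ts) := by
    intro t ht
    rw [← hts_pow]
    exact Real.rpow_lt_rpow_iff ht.le htspos.le hq1
  -- continuity of g on positive sets
  have hgcont : ∀ s : Set ℝ, (∀ x ∈ s, (0:ℝ) < x) → ContinuousOn g s := by
    intro s hs x hx
    exact ((hgderiv x (hs x hx)).continuousAt).continuousWithinAt
  -- monotonicity of g
  have hgmono : StrictMonoOn g (Ioc 0 ts) := by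
    apply strictMonoOn_of_deriv_pos (convex_Ioc 0 ts)
      (hgcont _ (fun x hx => hx.1))
    intro x hx
    rw [interior_Ioc] at hx
    rw [(hgderiv x hx.1).deriv, hgderiv_sign x hx.1]
    have : x ^ (q - 1) < r := (hlt_iff x hx.1).2 hx.2
    have h1 : 0 < r - x ^ (q - 1) := by linarith
    exact mul_pos (mul_pos (mul_pos hC hq2) hx.1) h1
  have hganti : StrictAntiOn g (Ici ts) := by
    apply strictAntiOn_of_deriv_neg (convex_Ici ts)
      (hgcont _ (fun x hx => lt_of_lt_of_le htspos hx))
    intro x hx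
    rw [interior_Ici] at hx
    have hxpos : 0 < x := htspos.trans hx
    rw [(hgderiv x hxpos).deriv, hgderiv_sign x hxpos]
    have : r < x ^ (q - 1) := by
      rw [← hts_pow]
      exact Real.rpow_lt_rpow htspos.le hx hq1
    have h1 : r - x ^ (q - 1) < 0 := by linarith
    exact mul_neg_of_pos_of_neg (mul_pos (mul_pos hC hq2) hxpos) h1
  -- g ts > 0
  have hgts : 0 < g ts := by
    set e : ℝ := (q - 1) / 2 with he
    set s : ℝ := B * (q + 1) / (A * (q - 1)) with hs
    have hspos : 0 < s := by positivity
    have hepos : 0 < e := by positivity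
    have pB : (0:ℝ) < B ^ e := Real.rpow_pos_of_pos hB _
    have pA : (0:ℝ) < A ^ e := Real.rpow_pos_of_pos hA _
    have pq1 : (0:ℝ) < (q - 1) ^ e := Real.rpow_pos_of_pos hq1 _
    have pq2 : (0:ℝ) < (q + 1) ^ e := Real.rpow_pos_of_pos hq2 _
    -- key inequality : s ^ e < r
    have hkey : s ^ e < r := by
      have hCnew : C < 2 * ((q - 1) ^ e / ((q + 1) ^ e * (q + 1)) * (A ^ e * A / B ^ e)) := by
        have h1 : (q + 1) / 2 = e + 1 := by rw [he]; ring
        have h2 : (q + 1) ^ (e + 1) = (q + 1) ^ e * (q + 1) := by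
          rw [Real.rpow_add hq2, Real.rpow_one]
        have h3 : A ^ (e + 1) = A ^ e * A := by
          rw [Real.rpow_add hA, Real.rpow_one]
        rw [h1, h2, h3] at hcond
        linarith
      have hse : s ^ e = B ^ e * (q + 1) ^ e / (A ^ e * (q - 1) ^ e) := by
        rw [hs, Real.div_rpow (by positivity) (by positivity),
          Real.mul_rpow hB.le hq2.le, Real.mul_rpow hA.le hq1.le]
      rw [hse, hr, div_lt_div_iff₀ (by positivity) (by positivity)]
      have h2 := mul_lt_mul_of_pos_right hCnew
        (show (0:ℝ) < B ^ e * (q + 1) ^ e * (q + 1) by positivity)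
      calc B ^ e * (q + 1) ^ e * (C * (q + 1))
          = C * (B ^ e * (q + 1) ^ e * (q + 1)) := by ring
        _ < 2 * ((q - 1) ^ e / ((q + 1) ^ e * (q + 1)) * (A ^ e * A / B ^ e)) *
            (B ^ e * (q + 1) ^ e * (q + 1)) := h2
        _ = 2 * A * (A ^ e * (q - 1) ^ e) := by field_simp
    -- hence s < ts^2
    have hts2 : s < ts ^ 2 := by
      have h1 : (s ^ e) ^ (2 / (q - 1)) < r ^ (2 / (q - 1)) :=
        Real.rpow_lt_rpow (by positivity) hkey (by positivity)
      have h2 : (s ^ e) ^ (2 / (q - 1)) = s := by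
        rw [← Real.rpow_mul hspos.le, show e * (2 / (q - 1)) = 1 by
          rw [he]; field_simp, Real.rpow_one]
      have h3 : r ^ (2 / (q - 1)) = ts ^ 2 := by
        rw [hts, ← Real.rpow_natCast (r ^ (q - 1)⁻¹) 2, ← Real.rpow_mul hrpos.le]
        congr 1
        push_cast
        field_simp
      rw [← h2, ← h3]
      exact h1
    have hts_q1 : ts ^ (q + 1) = ts ^ 2 * r := by
      rw [show q + 1 = 2 + (q - 1) by ring, Real.rpow_add htspos, hts_pow]
      congr 1
      rw [← Real.rpow_natCast ts 2]
      norm_num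
    have hBlt : B * (q + 1) < ts ^ 2 * (A * (q - 1)) := by
      rw [hs] at hts2
      exact (div_lt_iff₀ (by positivity)).1 hts2
    have hCr : C * (ts ^ 2 * r) = 2 * A * ts ^ 2 / (q + 1) := by
      rw [hr]; field_simp
    show 0 < A * ts ^ 2 - B - C * ts ^ (q + 1)
    rw [hts_q1, hCr]
    have heq : A * ts ^ 2 - B - 2 * A * ts ^ 2 / (q + 1) =
        (ts ^ 2 * (A * (q - 1)) - B * (q + 1)) / (q + 1) := by
      field_simp; ring
    rw [heq]
    exact div_pos (by linarith) hq2
  -- small point with g < 0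
  set ε : ℝ := min (ts / 2) (Real.sqrt (B / A)) with hε
  have hε0 : 0 < ε := lt_min (by positivity) (Real.sqrt_pos.2 (by positivity))
  have hεts : ε < ts := (min_le_left _ _).trans_lt (by linarith)
  have hgε : g ε < 0 := by
    have hle : ε ≤ Real.sqrt (B / A) := min_le_right _ _
    have h1 : ε ^ 2 ≤ B / A := by
      calc ε ^ 2 ≤ (Real.sqrt (B / A)) ^ 2 := by nlinarith
        _ = B / A := Real.sq_sqrt (by positivity)
    have h2 : A * ε ^ 2 ≤ B := by
      rw [le_div_iff₀ hA] at h1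
      linarith
    have h3 : 0 < C * ε ^ (q + 1) := by
      have := Real.rpow_pos_of_pos hε0 (q + 1)
      positivity
    show A * ε ^ 2 - B - C * ε ^ (q + 1) < 0
    linarith
  -- large point with g < 0
  set T : ℝ := max (ts + 1) ((A / C) ^ (q - 1)⁻¹ + 1) with hT
  have hTts : ts < T := lt_of_lt_of_le (by linarith) (le_max_left _ _)
  have hT0 : 0 < T := htspos.trans hTts
  have hgT : g T < 0 := by
    have h1 : (A / C) ^ (q - 1)⁻¹ < T :=
      lt_of_lt_of_le (by linarith) (le_max_right _ _)
    have h2 : A / C < T ^ (q - 1) := by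
      have h := Real.rpow_lt_rpow (by positivity) h1 hq1
      rwa [Real.rpow_inv_rpow (by positivity) hq1.ne'] at h
    have h3 : A < T ^ (q - 1) * C := (div_lt_iff₀ hC).1 h2
    have hTq1 : T ^ (q + 1) = T ^ 2 * T ^ (q - 1) := by
      rw [show q + 1 = 2 + (q - 1) by ring, Real.rpow_add hT0]
      congr 1
      rw [← Real.rpow_natCast T 2]
      norm_num
    show A * T ^ 2 - B - C * T ^ (q + 1) < 0
    rw [hTq1]
    have hT2 : 0 < T ^ 2 := by positivity
    nlinarith
  -- IVT : two zeros of g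
  obtain ⟨tp, htpI, hgtp⟩ : ∃ tp ∈ Ioo ε ts, g tp = 0 := by
    obtain ⟨tp, htp, h0⟩ := intermediate_value_Ioo hεts.le
      (hgcont (Icc ε ts) (fun x hx => lt_of_lt_of_le hε0 hx.1))
      (show (0:ℝ) ∈ Ioo (g ε) (g ts) from ⟨hgε, hgts⟩)
    exact ⟨tp, htp, h0⟩
  obtain ⟨tm, htmI, hgtm⟩ : ∃ tm ∈ Ioo ts T, g tm = 0 := by
    obtain ⟨tm, htm, h0⟩ := intermediate_value_Ioo' hTts.le
      (hgcont (Icc ts T) (fun x hx => lt_of_lt_of_le htspos hx.1))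
      (show (0:ℝ) ∈ Ioo (g T) (g ts) from ⟨hgT, hgts⟩)
    exact ⟨tm, htm, h0⟩
  have htp0 : 0 < tp := hε0.trans htpI.1
  have htpts : tp < ts := htpI.2
  have htstm : ts < tm := htmI.1
  have htptm : tp < tm := htpts.trans htstm
  have htm0 : 0 < tm := htspos.trans htstm
  -- sign of g between / outside the zeros
  have hsign1 : ∀ t : ℝ, 0 < t → t < tp → g t < 0 := by
    intro t ht h
    have := hgmono ⟨ht, (h.trans htpts).le⟩ ⟨htp0, htpts.le⟩ h
    rwa [hgtp] at this
  have hsign2 : ∀ t : ℝ, tp < t → t < tm → 0 < g t := by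
    intro t h1 h2
    rcases le_or_gt t ts with hle | hlt
    · have := hgmono ⟨htp0, htpts.le⟩ ⟨htp0.trans h1, hle⟩ h1
      rwa [hgtp] at this
    · have := hganti hlt.le htstm.le h2
      rwa [hgtm] at this
  have hsign3 : ∀ t : ℝ, tm < t → g t < 0 := by
    intro t h
    have := hganti htstm.le (htstm.trans h).le h
    rwa [hgtm] at this
  -- deriv F vanishes at tp, tm
  have hdtp : deriv F tp = 0 := by rw [hFderiv tp htp0, hgtp, zero_div]
  have hdtm : deriv F tm = 0 := by rw [hFderiv tm htm0, hgtm, zero_div]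
  -- uniqueness
  have huniq : ∀ t : ℝ, 0 < t → t ≠ tp → t ≠ tm → deriv F t ≠ 0 := by
    intro t ht hne1 hne2 h0
    rw [hFderiv t ht, div_eq_zero_iff] at h0
    have hgt0 : g t = 0 := h0.resolve_right ht.ne'
    rcases lt_trichotomy t tp with h | h | h
    · linarith [hsign1 t ht h]
    · exact hne1 h
    rcases lt_trichotomy t tm with h' | h' | h'
    · linarith [hsign2 t h h']
    · exact hne2 h'
    · linarith [hsign3 t h']
  -- continuity of F on positive sets
  have hFcont : ∀ s : Set ℝ, (∀ x ∈ s, (0:ℝ) < x) → ContinuousOn F s := by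
    intro s hs x hx
    exact ((Ffib_hasDerivAt A B C q W hq2.ne' (hs x hx)).continuousAt).continuousWithinAt
  -- monotonicity of F
  have hFmono : StrictMonoOn F (Icc tp tm) := by
    apply strictMonoOn_of_deriv_pos (convex_Icc _ _)
      (hFcont _ (fun x hx => htp0.trans_le hx.1))
    intro x hx
    rw [interior_Icc] at hx
    have hx0 : 0 < x := htp0.trans hx.1
    rw [hFderiv x hx0]
    exact div_pos (hsign2 x hx.1 hx.2) hx0
  have hFanti1 : StrictAntiOn F (Icc (tp / 2) tp) := by
    apply strictAntiOn_of_deriv_neg (convex_Icc _ _)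
      (hFcont _ (fun x hx => lt_of_lt_of_le (by linarith) hx.1))
    intro x hx
    rw [interior_Icc] at hx
    have hx0 : 0 < x := lt_trans (by linarith) hx.1
    rw [hFderiv x hx0]
    exact div_neg_of_neg_of_pos (hsign1 x hx0 hx.2) hx0
  have hFanti2 : StrictAntiOn F (Icc tm (tm + 1)) := by
    apply strictAntiOn_of_deriv_neg (convex_Icc _ _)
      (hFcont _ (fun x hx => htm0.trans_le hx.1))
    intro x hx
    rw [interior_Icc] at hx
    have hx0 : 0 < x := htm0.trans hx.1
    rw [hFderiv x hx0]
    exact div_neg_of_neg_of_pos (hsign3 x hx.1) hx0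
  -- local min at tp
  have hmin : IsLocalMin F tp := by
    filter_upwards [Ioo_mem_nhds (by linarith : tp / 2 < tp) htptm] with t ht
    rcases lt_trichotomy t tp with h | h | h
    · exact (hFanti1 ⟨ht.1.le, h.le⟩ ⟨by linarith, le_refl tp⟩ h).le
    · rw [h]
    · exact (hFmono ⟨le_refl tp, htptm.le⟩ ⟨h.le, ht.2.le⟩ h).le
  -- local max at tm
  have hmax : IsLocalMax F tm := by
    filter_upwards [Ioo_mem_nhds htptm (by linarith : tm < tm + 1)] with t ht
    rcases lt_trichotomy t tm with h | h | h
    · exact (hFmono ⟨ht.1.le, h.le⟩ ⟨htptm.le, le_refl tm⟩ h).le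
    · rw [h]
    · exact (hFanti2 ⟨le_refl tm, by linarith⟩ ⟨h.le, ht.2.le⟩ h).le
  exact ⟨tp, tm, htp0, htptm, hdtp, hdtm, huniq, hmin, hmax,
    hFmono ⟨le_refl tp, htptm.le⟩ ⟨htptm.le, le_refl tm⟩ htptm⟩
end
end

section
/- Let t > 0 and let f : ℝ² → [0,∞) be integrable such that the function (x,y) ↦ log|x−y| · f(x) f(y) (interpreted as 0 on the diagonal {x = y}) is integrable on ℝ²×ℝ². Define f_t : ℝ² → [0,∞) by f_t(x) = t² f(t x). Then (x,y) ↦ log|x−y| · f_t(x) f_t(y) is integrable on ℝ²×ℝ², and ∬_{ℝ²×ℝ²} log|x−y| f_t(x) f_t(y) dx dy = ∬_{ℝ²×ℝ²} log|x−y| f(x) f(y) dx dy − ( ∫_{ℝ²} f dx )² · log t. -/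
open MeasureTheory

noncomputable section

/-- Scaling of the logarithmic interaction: for `f_t(x) = t² f(tx)`,
`∬ log|x−y| f_t(x) f_t(y) = ∬ log|x−y| f(x) f(y) − (∫ f)² log t`.
(In Lean, `Real.log 0 = 0`, so the integrand is interpreted as `0` on the diagonal.) -/
theorem stmt17 (t : ℝ) (ht : 0 < t) (f : Plane → ℝ) (hf0 : ∀ x, 0 ≤ f x)
    (hfint : Integrable f)
    (hlog : Integrable (fun z : Plane × Plane => Real.log ‖z.1 - z.2‖ * f z.1 * f z.2)) :
    Integrable (fun z : Plane × Plane =>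
      Real.log ‖z.1 - z.2‖ * (t ^ 2 * f (t • z.1)) * (t ^ 2 * f (t • z.2))) ∧
    (∫ z : Plane × Plane,
        Real.log ‖z.1 - z.2‖ * (t ^ 2 * f (t • z.1)) * (t ^ 2 * f (t • z.2))) =
      (∫ z : Plane × Plane, Real.log ‖z.1 - z.2‖ * f z.1 * f z.2) -
        (∫ x, f x) ^ 2 * Real.log t := by
  haveI : (volume : Measure (Plane × Plane)).IsAddHaarMeasure :=
    Measure.prod.instIsAddHaarMeasure _ _
  have hff : Integrable (fun z : Plane × Plane => f z.1 * f z.2) := hfint.mul_prod hfint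
  set h : Plane × Plane → ℝ :=
    fun z => Real.log ‖z.1 - z.2‖ * f z.1 * f z.2 - Real.log t * (f z.1 * f z.2) with hh_def
  have hh : Integrable h := hlog.sub (hff.const_mul _)
  have hcomp : Integrable (fun z : Plane × Plane => h (t • z)) :=
    hh.comp_smul ht.ne'
  -- diagonal is null
  have hdiag : ∀ᵐ z : Plane × Plane, z.1 ≠ z.2 := by
    have hm : MeasurableSet {z : Plane × Plane | z.1 = z.2} :=
      (isClosed_eq continuous_fst continuous_snd).measurableSet
    rw [ae_iff]
    simp only [not_ne_iff]
    rw [Measure.volume_eq_prod, Measure.prod_apply hm]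
    have : ∀ x : Plane, (Prod.mk x ⁻¹' {z : Plane × Plane | z.1 = z.2}) = {x} := by
      intro x; ext y; simp [eq_comm]
    simp [this]
  have hfindim : Module.finrank ℝ (Plane × Plane) = 4 := by
    simp [Module.finrank_prod]
  have heq : (fun z : Plane × Plane =>
      Real.log ‖z.1 - z.2‖ * (t ^ 2 * f (t • z.1)) * (t ^ 2 * f (t • z.2))) =ᵐ[volume]
      (fun z : Plane × Plane => t ^ 4 * h (t • z)) := by
    filter_upwards [hdiag] with z hz
    have hne : ‖z.1 - z.2‖ ≠ 0 := norm_ne_zero_iff.2 (sub_ne_zero.2 hz)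
    have hnorm : ‖t • z.1 - t • z.2‖ = t * ‖z.1 - z.2‖ := by
      rw [← smul_sub, norm_smul, Real.norm_eq_abs, abs_of_pos ht]
    simp only [hh_def, Prod.smul_fst, Prod.smul_snd, hnorm,
      Real.log_mul ht.ne' hne]
    ring
  have hint2 : Integrable (fun z : Plane × Plane => t ^ 4 * h (t • z)) :=
    hcomp.const_mul _
  refine ⟨hint2.congr heq.symm, ?_⟩
  rw [integral_congr_ae heq, integral_const_mul,
    Measure.integral_comp_smul volume h t, hfindim]
  have hI : ∫ z : Plane × Plane, h z =
      (∫ z : Plane × Plane, Real.log ‖z.1 - z.2‖ * f z.1 * f z.2) -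
        Real.log t * ((∫ x, f x) * (∫ x, f x)) := by
    rw [hh_def]
    rw [integral_sub hlog (hff.const_mul _), integral_const_mul]
    congr 1
    rw [Measure.volume_eq_prod, integral_prod_mul]
  rw [hI, smul_eq_mul]
  have ht4 : |((t ^ 4)⁻¹ : ℝ)| = (t ^ 4)⁻¹ := abs_of_pos (by positivity)
  rw [ht4]
  field_simp
end
end

section
/- Let f : ℝ² → ℝ be integrable and define g : ℝ²×ℝ² → ℝ by g(x,y) = ((|x|² − ⟨x,y⟩)/|x−y|²) · f(x) f(y) for x ≠ y and g(x,x) = 0, where ⟨·,·⟩ is the Euclidean inner product on ℝ². If g is integrable on ℝ²×ℝ², then ∬_{ℝ²×ℝ²} g(x,y) dx dy = (1/2) ( ∫_{ℝ²} f dx )². -/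
open MeasureTheory

noncomputable section

lemma diag_null : (volume : Measure (Plane × Plane)) {z | z.1 = z.2} = 0 := by
  rw [Measure.volume_eq_prod]
  rw [Measure.measure_prod_null (measurableSet_eq_fun measurable_fst measurable_snd)]
  filter_upwards with x
  have : {y : Plane | (x, y).1 = (x, y).2} ⊆ {x} := by
    intro y hy; simp at hy ⊢; exact hy
  exact measure_mono_null this (measure_singleton x)

/-- `∬ ((|x|² − ⟨x,y⟩)/|x−y|²) f(x) f(y) dx dy = (1/2)(∫ f)²` by symmetrization. -/
theorem stmt18 (f : Plane → ℝ) (hf : Integrable f) (g : Plane × Plane → ℝ)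
    (hg : ∀ x y : Plane, x ≠ y →
      g (x, y) = (‖x‖ ^ 2 - (inner ℝ x y : ℝ)) / ‖x - y‖ ^ 2 * f x * f y)
    (hgdiag : ∀ x : Plane, g (x, x) = 0)
    (hgint : Integrable g) :
    (∫ z : Plane × Plane, g z) = (1 / 2) * (∫ x, f x) ^ 2 := by
  have hgswapint : Integrable (fun z : Plane × Plane => g z.swap) := by
    rw [Measure.volume_eq_prod] at hgint ⊢
    exact hgint.swap
  have hint : ∫ z : Plane × Plane, g z.swap = ∫ z : Plane × Plane, g z := by
    rw [Measure.volume_eq_prod]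
    exact integral_prod_swap g
  have key : ∀ᵐ z : Plane × Plane, g z + g z.swap = f z.1 * f z.2 := by
    have hne : ∀ᵐ z : Plane × Plane, z.1 ≠ z.2 := by
      rw [ae_iff]; simpa using diag_null
    filter_upwards [hne] with z hz
    obtain ⟨x, y⟩ := z
    simp only [Prod.swap] at *
    rw [hg x y hz, hg y x (Ne.symm hz)]
    have hxy : ‖x - y‖ ≠ 0 := by simpa [sub_eq_zero] using hz
    set I : ℝ := inner ℝ x y with hI
    have hnorm : ‖x - y‖ ^ 2 = ‖x‖ ^ 2 - 2 * I + ‖y‖ ^ 2 := by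
      rw [hI, @norm_sub_sq_real]
    have hyx : ‖y - x‖ = ‖x - y‖ := norm_sub_rev y x
    have hinner : (inner ℝ y x : ℝ) = I := real_inner_comm x y
    rw [hyx, hinner]
    field_simp
    rw [hnorm]; ring
  have hfprod : Integrable (fun z : Plane × Plane => f z.1 * f z.2) := by
    rw [Measure.volume_eq_prod]
    exact hf.mul_prod hf
  have h1 : ∫ z : Plane × Plane, (g z + g z.swap) = (∫ x, f x) ^ 2 := by
    rw [integral_congr_ae key]
    rw [Measure.volume_eq_prod, integral_prod_mul]
    ring
  rw [integral_add hgint hgswapint, hint] at h1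
  linarith
end
end
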